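/- arXiv:1412.4615 — 3 statements merged into one kernel-verified Lean document; each statement's English description precedes it below -/
import Mathlib

section
/- (Lemma 2.2.) Let Φ be a branching mechanism with drift parameter α ∈ ℝ, and for λ ≥ 0 let u_t(λ) denote the unique locally bounded nonnegative solution of u_t = λt − ∫₀ᵗ Φ(u_s) ds. Then for every t ≥ 0 the map λ ↦ u_t(λ) has right derivative at λ = 0 equal to ∫₀ᵗ e^{−αs} ds = (1 − e^{−αt})/α; that is, lim_{λ→0+} u_t(λ)/λ = (1 − e^{−αt})/α, where (1 − e^{−αt})/α is interpreted as t when α = 0. -/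
open MeasureTheory Filter Set

/-- The branching mechanism `Φ(λ) = αλ + βλ² + ∫_{(0,∞)} (e^{-λθ} - 1 + λθ) π(dθ)`. -/
noncomputable def Phi (α β : ℝ) (π : Measure ℝ) (lam : ℝ) : ℝ :=
  α * lam + β * lam ^ 2 + ∫ θ, (Real.exp (-lam * θ) - 1 + lam * θ) ∂π

/-- `u` is a locally bounded nonnegative solution of `u_t = λt - ∫₀ᵗ Φ(u_s) ds`. -/
def IsMassSolution (Φ : ℝ → ℝ) (lam : ℝ) (u : ℝ → ℝ) : Prop :=
  (∀ t, 0 ≤ t → 0 ≤ u t) ∧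
  (∀ T, 0 < T → BddAbove (u '' Set.Icc 0 T)) ∧
  (∀ t, 0 ≤ t → u t = lam * t - ∫ s in (0:ℝ)..t, Φ (u s))

section AuxLemmas
open intervalIntegral
variable {α β : ℝ} {π : Measure ℝ}

noncomputable def Jfun (π : Measure ℝ) (x : ℝ) : ℝ := ∫ θ, min θ (x * θ ^ 2) ∂π


lemma pos_ae (hsupp : π (Set.Iic 0) = 0) : ∀ᵐ θ ∂π, 0 < θ := by
  rw [ae_iff]
  convert hsupp using 2
  ext θ; simp [not_lt]

lemma integrand_nonneg {x θ : ℝ} : 0 ≤ Real.exp (-x * θ) - 1 + x * θ := by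
  have h := Real.add_one_le_exp (-(x * θ))
  rw [neg_mul]; linarith

lemma integrand_le {x θ : ℝ} (hx : 0 ≤ x) (hθ : 0 ≤ θ) :
    Real.exp (-x * θ) - 1 + x * θ ≤ x * min θ (x * θ ^ 2) := by
  have hy : 0 ≤ x * θ := mul_nonneg hx hθ
  have hmin : x * min θ (x * θ ^ 2) = min (x * θ) ((x * θ) ^ 2) := by
    rw [mul_min_of_nonneg _ _ hx]
    congr 1; ring
  rw [hmin]
  refine le_min ?_ ?_
  · have : Real.exp (-x * θ) ≤ 1 := Real.exp_le_one_iff.mpr (by nlinarith)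
    linarith
  · rcases le_or_gt (x * θ) 1 with h1 | h1
    · have habs : |(-(x * θ))| ≤ 1 := by rw [abs_neg, abs_of_nonneg hy]; exact h1
      have := Real.abs_exp_sub_one_sub_id_le habs
      rw [abs_le] at this
      have h2 := this.2
      rw [neg_mul]
      nlinarith [h2]
    · have : Real.exp (-x * θ) ≤ 1 := Real.exp_le_one_iff.mpr (by nlinarith)
      nlinarith

lemma min_xsq_le {x θ : ℝ} (hx : 0 ≤ x) (hθ : 0 ≤ θ) :
    min (x * θ) ((x * θ) ^ 2) ≤ max x (x ^ 2) * min θ (θ ^ 2) := by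
  rcases le_total θ (θ ^ 2) with h | h
  · rw [min_eq_left h]
    calc min (x * θ) ((x * θ) ^ 2) ≤ x * θ := min_le_left _ _
    _ ≤ max x (x ^ 2) * θ := mul_le_mul_of_nonneg_right (le_max_left _ _) hθ
  · rw [min_eq_right h]
    calc min (x * θ) ((x * θ) ^ 2) ≤ (x * θ) ^ 2 := min_le_right _ _
    _ = x ^ 2 * θ ^ 2 := by ring
    _ ≤ max x (x ^ 2) * θ ^ 2 := mul_le_mul_of_nonneg_right (le_max_right _ _) (sq_nonneg _)

lemma integrand_le' {x θ : ℝ} (hx : 0 ≤ x) (hθ : 0 ≤ θ) :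
    Real.exp (-x * θ) - 1 + x * θ ≤ max x (x ^ 2) * min θ (θ ^ 2) := by
  refine (integrand_le hx hθ).trans ?_
  have hmin : x * min θ (x * θ ^ 2) = min (x * θ) ((x * θ) ^ 2) := by
    rw [mul_min_of_nonneg _ _ hx]; congr 1; ring
  rw [hmin]; exact min_xsq_le hx hθ

lemma integrable_of_min_bound (hint : Integrable (fun θ => min θ (θ ^ 2)) π)
    (hsupp : π (Set.Iic 0) = 0) {g : ℝ → ℝ} (hg : Continuous g) (C : ℝ)
    (hbound : ∀ θ, 0 < θ → ‖g θ‖ ≤ C * min θ (θ ^ 2)) : Integrable g π := by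
  refine Integrable.mono (hint.const_mul C) hg.aestronglyMeasurable ?_
  filter_upwards [pos_ae hsupp] with θ hθ
  exact (hbound θ hθ).trans (le_abs_self _)

lemma integrable_exp_term (hint : Integrable (fun θ => min θ (θ ^ 2)) π)
    (hsupp : π (Set.Iic 0) = 0) {x : ℝ} (hx : 0 ≤ x) :
    Integrable (fun θ => Real.exp (-x * θ) - 1 + x * θ) π := by
  refine integrable_of_min_bound hint hsupp (by continuity) (max x (x ^ 2)) fun θ hθ => ?_
  rw [Real.norm_eq_abs, abs_of_nonneg integrand_nonneg]
  exact integrand_le' hx hθ.le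

lemma integrable_min_term (hint : Integrable (fun θ => min θ (θ ^ 2)) π)
    (hsupp : π (Set.Iic 0) = 0) {x : ℝ} (hx : 0 ≤ x) :
    Integrable (fun θ => min θ (x * θ ^ 2)) π := by
  refine integrable_of_min_bound hint hsupp (by continuity) (max 1 x) fun θ hθ => ?_
  have h0 : 0 ≤ min θ (x * θ ^ 2) := le_min hθ.le (by positivity)
  rw [Real.norm_eq_abs, abs_of_nonneg h0]
  rcases le_total θ (θ ^ 2) with h | h
  · rw [min_eq_left h]
    calc min θ (x * θ ^ 2) ≤ θ := min_le_left _ _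
    _ ≤ max 1 x * θ := by nlinarith [le_max_left 1 x]
  · rw [min_eq_right h]
    calc min θ (x * θ ^ 2) ≤ x * θ ^ 2 := min_le_right _ _
    _ ≤ max 1 x * θ ^ 2 := mul_le_mul_of_nonneg_right (le_max_right _ _) (sq_nonneg _)

lemma J_nonneg (hsupp : π (Set.Iic 0) = 0) {x : ℝ} (hx : 0 ≤ x) : 0 ≤ Jfun π x := by
  refine integral_nonneg_of_ae ?_
  filter_upwards [pos_ae hsupp] with θ hθ
  exact le_min hθ.le (by positivity)

lemma J_mono (hint : Integrable (fun θ => min θ (θ ^ 2)) π) (hsupp : π (Set.Iic 0) = 0)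
    {x y : ℝ} (hx : 0 ≤ x) (hxy : x ≤ y) : Jfun π x ≤ Jfun π y := by
  refine integral_mono_ae (integrable_min_term hint hsupp hx)
    (integrable_min_term hint hsupp (hx.trans hxy)) ?_
  filter_upwards [pos_ae hsupp] with θ hθ
  exact min_le_min le_rfl (mul_le_mul_of_nonneg_right hxy (sq_nonneg _))

lemma Phi_ge (hβ : 0 ≤ β) (hsupp : π (Set.Iic 0) = 0) {x : ℝ} (hx : 0 ≤ x) :
    α * x ≤ Phi α β π x := by
  have h1 : 0 ≤ β * x ^ 2 := by positivity
  have h2 : 0 ≤ ∫ θ, (Real.exp (-x * θ) - 1 + x * θ) ∂π :=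
    integral_nonneg fun θ => integrand_nonneg
  unfold Phi; linarith

lemma Phi_le (hβ : 0 ≤ β) (hsupp : π (Set.Iic 0) = 0)
    (hint : Integrable (fun θ => min θ (θ ^ 2)) π) {x : ℝ} (hx : 0 ≤ x) :
    Phi α β π x ≤ α * x + x * (β * x + Jfun π x) := by
  have h2 : (∫ θ, (Real.exp (-x * θ) - 1 + x * θ) ∂π) ≤ x * Jfun π x := by
    rw [Jfun, ← MeasureTheory.integral_const_mul]
    refine integral_mono_ae (integrable_exp_term hint hsupp hx)
      ((integrable_min_term hint hsupp hx).const_mul x) ?_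
    filter_upwards [pos_ae hsupp] with θ hθ
    exact integrand_le hx hθ.le
  unfold Phi; nlinarith

lemma J_tendsto (hint : Integrable (fun θ => min θ (θ ^ 2)) π)
    (hsupp : π (Set.Iic 0) = 0) :
    Tendsto (Jfun π) (nhdsWithin 0 (Set.Ici 0)) (nhds 0) := by
  have key : Tendsto (fun x => ∫ θ, min θ (x * θ ^ 2) ∂π) (nhdsWithin 0 (Set.Ici 0))
      (nhds (∫ θ, (0:ℝ) ∂π)) := by
    refine tendsto_integral_filter_of_dominated_convergence (fun θ => min θ (θ ^ 2))
      ?_ ?_ hint ?_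
    · exact Eventually.of_forall fun x =>
        (continuous_id.min (continuous_const.mul (continuous_pow 2))).aestronglyMeasurable
    · have hev : ∀ᶠ x in nhdsWithin (0:ℝ) (Set.Ici 0), x ∈ Set.Icc (0:ℝ) 1 := by
        have h1 : Set.Iio (1:ℝ) ∈ nhdsWithin (0:ℝ) (Set.Ici 0) :=
          mem_nhdsWithin_of_mem_nhds (Iio_mem_nhds one_pos)
        filter_upwards [h1, self_mem_nhdsWithin] with x hx1 hx0
        exact ⟨hx0, le_of_lt hx1⟩
      filter_upwards [hev] with x hx
      filter_upwards [pos_ae hsupp] with θ hθ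
      have h0' : 0 ≤ min θ (x * θ ^ 2) := le_min hθ.le (by nlinarith [hx.1, sq_nonneg θ])
      rw [Real.norm_eq_abs, abs_of_nonneg h0']
      exact min_le_min le_rfl (by nlinarith [hx.2, sq_nonneg θ])
    · filter_upwards [pos_ae hsupp] with θ hθ
      have h2 : Tendsto (fun x : ℝ => min θ (x * θ ^ 2)) (nhds 0) (nhds (min θ (0 * θ ^ 2))) :=
        (continuous_const.min ((continuous_id.mul continuous_const))).tendsto 0
      simpa [min_eq_right hθ.le] using h2.mono_left nhdsWithin_le_nhds
  exact (by simpa using key : Tendsto (fun x => ∫ θ, min θ (x * θ ^ 2) ∂π) (nhdsWithin 0 (Set.Ici 0)) (nhds 0))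

lemma Phi_contOn (hint : Integrable (fun θ => min θ (θ ^ 2)) π)
    (hsupp : π (Set.Iic 0) = 0) : ContinuousOn (Phi α β π) (Set.Ici 0) := by
  have hpoly : Continuous fun x : ℝ => α * x + β * x ^ 2 := by continuity
  have hI : ∀ x₀ ∈ Set.Ici (0:ℝ), ContinuousWithinAt
      (fun x => ∫ θ, (Real.exp (-x * θ) - 1 + x * θ) ∂π) (Set.Ici 0) x₀ := by
    intro x₀ hx₀
    have hC : (0:ℝ) ≤ x₀ + 1 := by simp at hx₀; linarith
    refine tendsto_integral_filter_of_dominated_convergence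
      (fun θ => max (x₀ + 1) ((x₀ + 1) ^ 2) * min θ (θ ^ 2)) ?_ ?_ (hint.const_mul _) ?_
    · exact Eventually.of_forall fun x =>
        (by continuity : Continuous fun θ : ℝ => Real.exp (-x * θ) - 1 + x * θ).aestronglyMeasurable
    · have hev : ∀ᶠ x in nhdsWithin x₀ (Set.Ici 0), x ∈ Set.Icc (0:ℝ) (x₀ + 1) := by
        have h1 : Set.Iio (x₀ + 1) ∈ nhdsWithin x₀ (Set.Ici 0) :=
          mem_nhdsWithin_of_mem_nhds (Iio_mem_nhds (by linarith))
        filter_upwards [h1, self_mem_nhdsWithin] with x h1 h2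
        exact ⟨h2, le_of_lt h1⟩
      filter_upwards [hev] with x hx
      filter_upwards [pos_ae hsupp] with θ hθ
      rw [Real.norm_eq_abs, abs_of_nonneg integrand_nonneg]
      refine (integrand_le' hx.1 hθ.le).trans ?_
      have hmin : 0 ≤ min θ (θ ^ 2) := le_min hθ.le (sq_nonneg θ)
      have : max x (x ^ 2) ≤ max (x₀ + 1) ((x₀ + 1) ^ 2) := by
        refine max_le ?_ ?_
        · exact le_max_of_le_left hx.2
        · exact le_max_of_le_right (by nlinarith [hx.1, hx.2])
      exact mul_le_mul_of_nonneg_right this hmin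
    · refine Eventually.of_forall fun θ => ?_
      have : Continuous fun x : ℝ => Real.exp (-x * θ) - 1 + x * θ := by continuity
      exact (this.tendsto x₀).mono_left nhdsWithin_le_nhds
  intro x₀ hx₀
  exact (hpoly.continuousWithinAt).add (hI x₀ hx₀)


lemma bootstrap (hsupp : π (Set.Iic 0) = 0)
    (hint : Integrable (fun θ => min θ (θ ^ 2)) π)
    {lam : ℝ} (hlam : 0 ≤ lam) {w : ℝ → ℝ} (hw : IsMassSolution (Phi α β π) lam w)
    {T : ℝ} (hT : 0 < T) :
    IntervalIntegrable (fun s => Phi α β π (w s)) volume 0 T ∧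
      ContinuousOn w (Set.Icc 0 T) := by
  obtain ⟨hpos, hbdd, heq⟩ := hw
  have hΦc : ContinuousOn (Phi α β π) (Set.Ici 0) := Phi_contOn hint hsupp
  obtain ⟨M, hM⟩ := hbdd T hT
  set M' : ℝ := max M (lam * T) with hM'def
  have hwmem : ∀ s ∈ Set.Icc (0:ℝ) T, w s ∈ Set.Icc 0 M' := fun s hs =>
    ⟨hpos s hs.1, le_max_of_le_left (hM ⟨s, hs, rfl⟩)⟩
  obtain ⟨C, hC⟩ := (isCompact_Icc (a := (0:ℝ)) (b := M')).exists_bound_of_continuousOn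
    (hΦc.mono Set.Icc_subset_Ici_self)
  set f : ℝ → ℝ := fun s => Phi α β π (w s) with hfdef
  set S : Set ℝ := {t | t ∈ Set.Icc 0 T ∧ IntervalIntegrable f volume 0 t} with hSdef
  have h0S : (0:ℝ) ∈ S := ⟨⟨le_refl 0, hT.le⟩, IntervalIntegrable.refl⟩
  have hSne : S.Nonempty := ⟨0, h0S⟩
  have hSbdd : BddAbove S := ⟨T, fun t ht => ht.1.2⟩
  set τ : ℝ := sSup S with hτdef
  have hτ0 : 0 ≤ τ := le_csSup hSbdd h0S
  have hτT : τ ≤ T := csSup_le hSne fun t ht => ht.1.2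
  -- continuity of w below τ
  have hwIco : ContinuousOn w (Set.Ico 0 τ) := by
    intro t ht
    obtain ⟨s, hsS, hts⟩ := exists_lt_of_lt_csSup hSne ht.2
    have hws : ContinuousOn w (Set.Icc 0 s) := by
      have hprim : ContinuousOn (fun b => ∫ x in (0:ℝ)..b, f x) (Set.Icc 0 s) := by
        have := continuousOn_primitive_interval' hsS.2 left_mem_uIcc
        rwa [uIcc_of_le hsS.1.1] at this
      refine ContinuousOn.congr (((continuous_const.mul continuous_id).continuousOn).sub hprim)
        fun b hb => heq b hb.1
    have hmem : Set.Icc (0:ℝ) s ∈ nhdsWithin t (Set.Ico 0 τ) :=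
      mem_nhdsWithin.2 ⟨Set.Iio s, isOpen_Iio, hts, fun x hx => ⟨hx.2.1, hx.1.le⟩⟩
    exact (hws t ⟨ht.1, hts.le⟩).mono_of_mem_nhdsWithin hmem
  -- above τ the solution is linear
  have hup : ∀ t ∈ Set.Ioc τ T, w t = lam * t := by
    intro t ht
    have htS : t ∉ S := fun htS => absurd (le_csSup hSbdd htS) (not_le.2 ht.1)
    have hni : ¬ IntervalIntegrable f volume 0 t := fun h =>
      htS ⟨⟨hτ0.trans ht.1.le, ht.2⟩, h⟩
    have := heq t (hτ0.trans ht.1.le)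
    rwa [intervalIntegral.integral_undef hni, sub_zero] at this
  -- f is a.e. strongly measurable on [0,T]
  have hf1 : ContinuousOn f (Set.Ico 0 τ) :=
    hΦc.comp hwIco fun s hs => hpos s hs.1
  have hf2 : ContinuousOn f (Set.Ioc τ T) := by
    refine ContinuousOn.congr
      (hΦc.comp ((continuous_const.mul continuous_id).continuousOn)
        fun t ht => mul_nonneg hlam (hτ0.trans ht.1.le)) ?_
    intro t ht; simp only [hfdef, Function.comp_apply, hup t ht, id_eq, Pi.mul_apply]
  have hmeas1 : AEStronglyMeasurable f (volume.restrict (Set.Ico 0 τ)) :=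
    hf1.aestronglyMeasurable measurableSet_Ico
  have hmeas2 : AEStronglyMeasurable f (volume.restrict (Set.Ioc τ T)) :=
    hf2.aestronglyMeasurable measurableSet_Ioc
  have hmeasU : AEStronglyMeasurable f
      (volume.restrict (Set.Ico 0 τ ∪ Set.Ioc τ T)) :=
    (hmeas1.add_measure hmeas2).mono_measure (Measure.restrict_union_le _ _)
  have hmeasτ : AEStronglyMeasurable f (volume.restrict {τ}) := by
    rw [Measure.restrict_eq_zero.2 (measure_singleton τ)]
    exact aestronglyMeasurable_zero_measure f
  have hsub : Set.Icc (0:ℝ) T ⊆ {τ} ∪ (Set.Ico 0 τ ∪ Set.Ioc τ T) := by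
    intro x hx
    rcases lt_trichotomy x τ with h | h | h
    · exact Or.inr (Or.inl ⟨hx.1, h⟩)
    · exact Or.inl (by simp [h])
    · exact Or.inr (Or.inr ⟨h, hx.2⟩)
  have hmeasIcc : AEStronglyMeasurable f (volume.restrict (Set.Icc 0 T)) := by
    refine AEStronglyMeasurable.mono_measure ?_
      ((Measure.restrict_mono hsub le_rfl).trans (Measure.restrict_union_le _ _))
    exact hmeasτ.add_measure hmeasU
  have hboundf : ∀ᵐ s ∂(volume.restrict (Set.Icc (0:ℝ) T)), ‖f s‖ ≤ C := by
    rw [ae_restrict_iff' measurableSet_Icc]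
    exact Eventually.of_forall fun s hs => hC _ (hwmem s hs)
  have hIntOn : IntegrableOn f (Set.Icc 0 T) volume :=
    ⟨hmeasIcc, HasFiniteIntegral.restrict_of_bounded C measure_Icc_lt_top hboundf⟩
  have hII : IntervalIntegrable f volume 0 T := by
    apply IntegrableOn.intervalIntegrable
    rwa [uIcc_of_le hT.le]
  refine ⟨hII, ?_⟩
  have hprim : ContinuousOn (fun b => ∫ x in (0:ℝ)..b, f x) (Set.Icc 0 T) := by
    have := continuousOn_primitive_interval' hII left_mem_uIcc
    rwa [uIcc_of_le hT.le] at this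
  exact ContinuousOn.congr (((continuous_const.mul continuous_id).continuousOn).sub hprim)
    fun b hb => heq b hb.1

lemma deriv_of_solution (hsupp : π (Set.Iic 0) = 0)
    (hint : Integrable (fun θ => min θ (θ ^ 2)) π)
    {lam : ℝ} (hlam : 0 ≤ lam) {w : ℝ → ℝ} (hw : IsMassSolution (Phi α β π) lam w)
    {T : ℝ} (hT : 0 < T) :
    ∀ t₀ ∈ Set.Ico (0:ℝ) T, HasDerivWithinAt w (lam - Phi α β π (w t₀)) (Set.Ici t₀) t₀ := by
  obtain ⟨hII, hcw⟩ := bootstrap hsupp hint hlam hw (by linarith : (0:ℝ) < T + 1)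
  have hΦc : ContinuousOn (Phi α β π) (Set.Ici 0) := Phi_contOn hint hsupp
  obtain ⟨hpos, hbdd, heq⟩ := hw
  set f : ℝ → ℝ := fun s => Phi α β π (w s) with hfdef
  have hfc : ContinuousOn f (Set.Icc 0 (T + 1)) :=
    hΦc.comp hcw fun s hs => hpos s hs.1
  intro t₀ ht₀
  have ht₀T : t₀ < T + 1 := by linarith [ht₀.2]
  have hmem : Set.Icc (0:ℝ) (T + 1) ∈ nhdsWithin t₀ (Set.Ici t₀) :=
    mem_nhdsWithin.2 ⟨Set.Iio (T + 1), isOpen_Iio, ht₀T,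
      fun x hx => ⟨ht₀.1.trans hx.2, hx.1.le⟩⟩
  have hmem' : Set.Icc (0:ℝ) (T + 1) ∈ nhdsWithin t₀ (Set.Ioi t₀) :=
    nhdsWithin_mono t₀ Set.Ioi_subset_Ici_self hmem
  have hprim : HasDerivWithinAt (fun x => ∫ s in (0:ℝ)..x, f s) (f t₀) (Set.Ici t₀) t₀ := by
    refine intervalIntegral.integral_hasDerivWithinAt_right
      (hII.mono_set ?_) ⟨Set.Icc 0 (T+1), hmem',
        (hfc.mono (fun x hx => hx)).aestronglyMeasurable measurableSet_Icc⟩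
      ((hfc t₀ ⟨ht₀.1, ht₀T.le⟩).mono_of_mem_nhdsWithin hmem')
    rw [uIcc_of_le ht₀.1, uIcc_of_le (by linarith : (0:ℝ) ≤ T + 1)]
    exact Set.Icc_subset_Icc le_rfl (by linarith [ht₀.2])
  have hlin : HasDerivWithinAt (fun x : ℝ => lam * x) lam (Set.Ici t₀) t₀ := by
    simpa using ((hasDerivAt_id t₀).const_mul lam).hasDerivWithinAt
  have h2 : HasDerivWithinAt (fun x => lam * x - ∫ s in (0:ℝ)..x, f s)
      (lam - f t₀) (Set.Ici t₀) t₀ := hlin.sub hprim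
  exact h2.congr (fun x hx => heq x (ht₀.1.trans hx)) (heq t₀ ht₀.1)


end AuxLemmas

lemma gB_scale (K ε x : ℝ) : gronwallBound 0 K ε x = ε * gronwallBound 0 K 1 x := by
  unfold gronwallBound
  split <;> ring

lemma gB_nonneg {K x : ℝ} (hK : 0 ≤ K) (hx : 0 ≤ x) : 0 ≤ gronwallBound 0 K 1 x := by
  unfold gronwallBound
  split
  · linarith
  · rename_i hne
    have h1 : 1 ≤ Real.exp (K * x) := Real.one_le_exp (by positivity)
    have hK' : 0 < K := hK.lt_of_ne (Ne.symm hne)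
    have : 0 ≤ 1 / K * (Real.exp (K * x) - 1) :=
      mul_nonneg (by positivity) (by linarith)
    simpa using this

lemma gB_mono {K : ℝ} (hK : 0 ≤ K) {x y : ℝ} (h : x ≤ y) :
    gronwallBound 0 K 1 x ≤ gronwallBound 0 K 1 y := by
  unfold gronwallBound
  split
  · linarith
  · rename_i hne
    have hK' : 0 < K := hK.lt_of_ne (Ne.symm hne)
    have hexp : Real.exp (K * x) ≤ Real.exp (K * y) :=
      Real.exp_le_exp.2 (mul_le_mul_of_nonneg_left h hK)
    have : 1 / K * (Real.exp (K * x) - 1) ≤ 1 / K * (Real.exp (K * y) - 1) :=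
      mul_le_mul_of_nonneg_left (by linarith) (by positivity)
    simpa using this

lemma alpha_int (a t : ℝ) :
    a * ∫ s in (0:ℝ)..t, Real.exp (-a * s) = 1 - Real.exp (-a * t) := by
  rcases eq_or_ne a 0 with h | h
  · simp [h]
  · have key : ∀ x ∈ uIcc (0:ℝ) t,
        HasDerivAt (fun s => -(Real.exp (-a * s) / a)) (Real.exp (-a * x)) x := by
      intro x _
      have h1 : HasDerivAt (fun s : ℝ => -a * s) (-a) x := by
        simpa using (hasDerivAt_id x).const_mul (-a)
      have h2 : HasDerivAt (fun s => Real.exp (-a * s)) (Real.exp (-a * x) * -a) x := h1.exp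
      have h3 := (h2.div_const a).neg
      refine HasDerivAt.congr_deriv h3 ?_
      rw [mul_neg, neg_div, neg_neg, mul_div_assoc, div_self h, mul_one]
    have hii : IntervalIntegrable (fun s => Real.exp (-a * s)) volume 0 t :=
      (Real.continuous_exp.comp (continuous_const.mul continuous_id)).intervalIntegrable 0 t
    rw [intervalIntegral.integral_eq_sub_of_hasDerivAt key hii]
    field_simp
    simp only [mul_zero, neg_zero, Real.exp_zero]
    ring

lemma apriori {α β : ℝ} {π : Measure ℝ} (hβ : 0 ≤ β) (hsupp : π (Set.Iic 0) = 0)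
    (hint : Integrable (fun θ => min θ (θ ^ 2)) π)
    {lam : ℝ} (hlam : 0 ≤ lam) {w : ℝ → ℝ} (hw : IsMassSolution (Phi α β π) lam w)
    {T : ℝ} (hT : 0 < T) :
    ∀ t ∈ Set.Icc (0:ℝ) T, w t ≤ lam * gronwallBound 0 |α| 1 t := by
  have hcont : ContinuousOn w (Set.Icc 0 T) := (bootstrap hsupp hint hlam hw hT).2
  have hderiv := deriv_of_solution hsupp hint hlam hw hT
  obtain ⟨hpos, hbdd, heq⟩ := hw
  have hw0 : w 0 ≤ 0 := by
    have := heq 0 le_rfl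
    simp at this
    simp [this]
  have key := le_gronwallBound_of_liminf_deriv_right_le (f := w)
    (f' := fun s => lam - Phi α β π (w s)) (δ := 0) (K := |α|) (ε := lam) (a := 0) (b := T)
    hcont (fun s hs r hr => (hderiv s hs).liminf_right_slope_le hr) hw0 ?_
  · intro t htmem
    have := key t htmem
    rwa [sub_zero, gB_scale] at this
  · intro s hs
    have h1 := Phi_ge (α := α) (β := β) (π := π) hβ hsupp (hpos s hs.1)
    have h2 : -|α| ≤ α := neg_abs_le α
    have h3 : 0 ≤ w s := hpos s hs.1
    have h4 := mul_le_mul_of_nonneg_right h2 h3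
    linarith


/-- Lemma 2.2: the right derivative of `λ ↦ u_t(λ)` at `λ = 0` equals
`∫₀ᵗ e^{-αs} ds = (1 - e^{-αt})/α` (interpreted as `t` when `α = 0`). -/
theorem mass_ode_right_derivative_at_zero
    (α β : ℝ) (hβ : 0 ≤ β) (π : Measure ℝ)
    (hsupp : π (Set.Iic 0) = 0) (hσ : SigmaFinite π)
    (hint : Integrable (fun θ => min θ (θ ^ 2)) π)
    (u : ℝ → ℝ → ℝ)
    (hu : ∀ lam : ℝ, 0 ≤ lam → IsMassSolution (Phi α β π) lam (u lam)) :
    ∀ t : ℝ, 0 ≤ t →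
      Tendsto (fun lam => u lam t / lam) (nhdsWithin 0 (Set.Ioi 0))
        (nhds (∫ s in (0:ℝ)..t, Real.exp (-α * s))) := by
  intro t ht
  set T : ℝ := t + 1 with hTdef
  have hT : 0 < T := by linarith
  set A : ℝ := gronwallBound 0 |α| 1 T with hA
  have hA0 : 0 ≤ A := gB_nonneg (abs_nonneg α) (by linarith)
  set c : ℝ := ∫ s in (0:ℝ)..t, Real.exp (-α * s) with hc
  set D : ℝ → ℝ := fun x => β * x + Jfun π x with hD
  have hD0 : ∀ x, 0 ≤ x → 0 ≤ D x := fun x hx =>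
    add_nonneg (by positivity) (J_nonneg hsupp hx)
  have key : ∀ lam : ℝ, 0 < lam → |u lam t / lam - c| ≤ A * A * D (lam * A) := by
    intro lam hlam
    have hwsol := hu lam hlam.le
    set w : ℝ → ℝ := u lam with hwdef
    have hcont : ContinuousOn w (Set.Icc 0 T) := (bootstrap hsupp hint hlam.le hwsol hT).2
    have hderiv := deriv_of_solution hsupp hint hlam.le hwsol hT
    have hap := apriori hβ hsupp hint hlam.le hwsol hT
    obtain ⟨hpos, hbdd, heq⟩ := hwsol
    have hwA : ∀ s ∈ Set.Icc (0:ℝ) T, w s ≤ lam * A := fun s hs =>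
      (hap s hs).trans (mul_le_mul_of_nonneg_left (gB_mono (abs_nonneg α) hs.2) hlam.le)
    have hlamA : 0 ≤ lam * A := mul_nonneg hlam.le hA0
    set g : ℝ → ℝ := fun x => lam * ∫ s in (0:ℝ)..x, Real.exp (-α * s) with hg
    have hgderiv : ∀ x : ℝ, HasDerivAt g (lam * Real.exp (-α * x)) x := by
      intro x
      have hce : Continuous fun s : ℝ => Real.exp (-α * s) :=
        Real.continuous_exp.comp (continuous_const.mul continuous_id)
      exact ((hce.integral_hasStrictDerivAt 0 x).hasDerivAt).const_mul lam
    have hgcont : Continuous g := by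
      refine continuous_iff_continuousAt.2 fun x => (hgderiv x).continuousAt
    set h : ℝ → ℝ := fun x => w x - g x with hh
    set ε' : ℝ := lam * A * D (lam * A) with hε'
    have hr : ∀ s ∈ Set.Ico (0:ℝ) T,
        0 ≤ Phi α β π (w s) - α * w s ∧ Phi α β π (w s) - α * w s ≤ ε' := by
      intro s hs
      have h0 : 0 ≤ w s := hpos s hs.1
      have h1 := Phi_ge (α := α) (β := β) (π := π) hβ hsupp h0
      have h2 := Phi_le (α := α) (β := β) (π := π) hβ hsupp hint h0
      have hwa : w s ≤ lam * A := hwA s ⟨hs.1, hs.2.le⟩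
      have hDle : D (w s) ≤ D (lam * A) :=
        add_le_add (mul_le_mul_of_nonneg_left hwa hβ) (J_mono hint hsupp h0 hwa)
      have hDw : 0 ≤ D (w s) := hD0 _ h0
      have hmul : w s * D (w s) ≤ lam * A * D (lam * A) :=
        mul_le_mul hwa hDle hDw hlamA
      constructor
      · linarith
      · have : Phi α β π (w s) - α * w s ≤ w s * D (w s) := by
          simp only [hD]; nlinarith
        linarith
    have hgron := norm_le_gronwallBound_of_norm_deriv_right_le (f := h)
      (f' := fun s => (lam - Phi α β π (w s)) - lam * Real.exp (-α * s))
      (δ := 0) (K := |α|) (ε := ε') (a := 0) (b := T)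
      (hcont.sub hgcont.continuousOn)
      (fun s hs => (hderiv s hs).sub ((hgderiv s).hasDerivWithinAt)) ?_ ?_
    · have hbt := hgron t ⟨ht, by linarith⟩
      rw [sub_zero, gB_scale] at hbt
      have hbt2 : ‖h t‖ ≤ ε' * A :=
        hbt.trans (mul_le_mul_of_nonneg_left (gB_mono (abs_nonneg α) (by linarith))
          (mul_nonneg hlamA (hD0 _ hlamA)))
      have hth : u lam t / lam - c = h t / lam := by
        have hgt : g t = lam * c := rfl
        simp only [hh, hgt, hwdef]
        field_simp
      rw [hth, abs_div, abs_of_pos hlam]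
      rw [div_le_iff₀ hlam]
      calc |h t| ≤ ε' * A := hbt2
      _ = A * A * D (lam * A) * lam := by rw [hε']; ring
    · have hw0 : w 0 = 0 := by
        have := heq 0 le_rfl; simpa using this
      have hg0 : g 0 = 0 := by simp [hg]
      simp [hh, hw0, hg0]
    · intro s hs
      have hid : α * g s = lam * (1 - Real.exp (-α * s)) := by
        have := alpha_int α s
        simp only [hg]
        linear_combination lam * this
      have hexpr : (lam - Phi α β π (w s)) - lam * Real.exp (-α * s)
          = -α * h s - (Phi α β π (w s) - α * w s) := by
        simp only [hh]
        linarith [hid]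
      show ‖lam - Phi α β π (w s) - lam * Real.exp (-α * s)‖ ≤ |α| * ‖h s‖ + ε'
      simp only [Real.norm_eq_abs]
      rw [hexpr]
      have hrs := hr s hs
      calc |(-α * h s - (Phi α β π (w s) - α * w s))|
          ≤ |(-α) * h s| + |Phi α β π (w s) - α * w s| := abs_sub _ _
      _ = |α| * |h s| + |Phi α β π (w s) - α * w s| := by rw [abs_mul, abs_neg]
      _ ≤ |α| * |h s| + ε' := by
          have := abs_of_nonneg hrs.1
          linarith [hrs.2, this.le]
  -- limit
  have hDt : Tendsto (fun lam : ℝ => D (lam * A)) (nhdsWithin 0 (Set.Ioi 0)) (nhds 0) := by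
    have h1 : Tendsto (fun lam : ℝ => lam * A) (nhdsWithin 0 (Set.Ioi 0))
        (nhdsWithin 0 (Set.Ici 0)) := by
      apply tendsto_nhdsWithin_of_tendsto_nhds_of_eventually_within
      · have := (continuous_id.mul (continuous_const (y := A))).tendsto (0:ℝ)
        simpa [Pi.mul_def] using this.mono_left nhdsWithin_le_nhds
      · filter_upwards [self_mem_nhdsWithin] with x hx
        exact mul_nonneg (le_of_lt hx) hA0
    have hD0' : Tendsto D (nhdsWithin 0 (Set.Ici 0)) (nhds 0) := by
      have hb : Tendsto (fun x : ℝ => β * x) (nhdsWithin 0 (Set.Ici 0)) (nhds 0) := by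
        have hbc : Continuous fun x : ℝ => β * x := continuous_const.mul continuous_id
        have := hbc.tendsto (0:ℝ)
        simpa using this.mono_left nhdsWithin_le_nhds
      simpa [hD] using hb.add (J_tendsto hint hsupp)
    exact hD0'.comp h1
  have hlim : Tendsto (fun lam : ℝ => A * A * D (lam * A)) (nhdsWithin 0 (Set.Ioi 0))
      (nhds 0) := by simpa using hDt.const_mul (A * A)
  rw [tendsto_iff_norm_sub_tendsto_zero]
  refine squeeze_zero' ?_ ?_ hlim
  · exact Eventually.of_forall fun x => norm_nonneg _
  · filter_upwards [self_mem_nhdsWithin] with lam hlam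
    simpa [Real.norm_eq_abs] using key lam hlam
end

section
/- Let Φ be a branching mechanism satisfying Assumption H0 (Φ(λ₀) > 0 for some λ₀ > 0), with Lévy measure π and largest root q of Φ. For r > 0, the truncated mechanism Φ^{(r,∞)} also satisfies Assumption H0, and its inverse (Φ^{(r,∞)})^{−1}(a) (the unique b ≥ q_r with Φ^{(r,∞)}(b) = a, where q_r is the largest root of Φ^{(r,∞)}) is well-defined for a ≥ 0. Then lim_{r→∞} (Φ^{(r,∞)})^{−1}(π((r,∞))) = q = Φ^{−1}(0). In particular, lim_{r→∞} (Φ^{(r,∞)})^{−1}(0) = Φ^{−1}(0). -/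
open MeasureTheory Filter Set

/-- The `(r,∞)`-truncated branching mechanism
`Φ^{(r,∞)}(λ) = Φ(λ) + ∫_{(r,∞)} (1 - e^{-λθ}) π(dθ)`. -/
noncomputable def PhiIoi (α β : ℝ) (π : Measure ℝ) (r lam : ℝ) : ℝ :=
  Phi α β π lam + ∫ θ in Set.Ioi r, (1 - Real.exp (-lam * θ)) ∂π

namespace TruncAux

lemma aux_nonneg (x : ℝ) : 0 ≤ Real.exp (-x) - 1 + x := by
  have := Real.add_one_le_exp (-x); linarith

lemma aux_le_lin {x : ℝ} (hx : 0 ≤ x) : Real.exp (-x) - 1 + x ≤ x := by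
  have h : Real.exp (-x) ≤ Real.exp 0 := Real.exp_le_exp.2 (by linarith)
  rw [Real.exp_zero] at h; linarith

lemma aux_le_sq {x : ℝ} (hx : 0 ≤ x) : Real.exp (-x) - 1 + x ≤ x ^ 2 := by
  have h2 : (1:ℝ) + x ≤ Real.exp x := by have := Real.add_one_le_exp x; linarith
  have h1 : Real.exp (-x) ≤ 1 / (1 + x) := by
    rw [Real.exp_neg, inv_eq_one_div]
    exact one_div_le_one_div_of_le (by linarith) h2
  have h3 : 1 / (1 + x) ≤ 1 - x + x ^ 2 := by
    rw [div_le_iff₀ (by linarith : (0:ℝ) < 1 + x)]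
    nlinarith [pow_nonneg hx 3]
  linarith

lemma aux_mono {x y : ℝ} (hx : 0 ≤ x) (hxy : x ≤ y) :
    Real.exp (-x) - 1 + x ≤ Real.exp (-y) - 1 + y := by
  have e1 : Real.exp (-x) * Real.exp (x - y) = Real.exp (-y) := by
    rw [← Real.exp_add]; ring_nf
  have e2 : (x - y) + 1 ≤ Real.exp (x - y) := Real.add_one_le_exp _
  have e3 : Real.exp (-x) ≤ Real.exp 0 := Real.exp_le_exp.2 (by linarith)
  rw [Real.exp_zero] at e3
  have e4 : 0 < Real.exp (-x) := Real.exp_pos _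
  nlinarith

lemma g_nonneg {l θ : ℝ} (h : 0 ≤ l * θ) : 0 ≤ 1 - Real.exp (-l * θ) := by
  have h1 : Real.exp (-l * θ) ≤ Real.exp 0 := Real.exp_le_exp.2 (by rw [neg_mul]; linarith)
  rw [Real.exp_zero] at h1; linarith

lemma g_le_one (l θ : ℝ) : 1 - Real.exp (-l * θ) ≤ 1 := by
  have := Real.exp_pos (-l * θ); linarith

lemma f_bound {l c θ : ℝ} (h0 : 0 ≤ l) (hlc : l ≤ c) (hθ : 0 < θ) :
    ‖Real.exp (-l * θ) - 1 + l * θ‖ ≤ max c (c ^ 2) * min θ (θ ^ 2) := by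
  have hc : 0 ≤ c := le_trans h0 hlc
  have hnn : 0 ≤ Real.exp (-l * θ) - 1 + l * θ := by
    have := aux_nonneg (l * θ); rw [neg_mul]; linarith
  rw [Real.norm_eq_abs, abs_of_nonneg hnn]
  have h1 : Real.exp (-l * θ) - 1 + l * θ ≤ Real.exp (-(c * θ)) - 1 + c * θ := by
    have := aux_mono (mul_nonneg h0 hθ.le) (mul_le_mul_of_nonneg_right hlc hθ.le)
    rw [neg_mul]; exact this
  rcases le_or_gt 1 θ with h | h
  · have hmin : min θ (θ ^ 2) = θ := min_eq_left (by nlinarith)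
    rw [hmin]
    have h2 : Real.exp (-(c * θ)) - 1 + c * θ ≤ c * θ := aux_le_lin (mul_nonneg hc hθ.le)
    have h3 : c ≤ max c (c ^ 2) := le_max_left _ _
    nlinarith
  · have hmin : min θ (θ ^ 2) = θ ^ 2 := min_eq_right (by nlinarith)
    rw [hmin]
    have h2 : Real.exp (-(c * θ)) - 1 + c * θ ≤ (c * θ) ^ 2 := aux_le_sq (mul_nonneg hc hθ.le)
    have h3 : c ^ 2 ≤ max c (c ^ 2) := le_max_right _ _
    nlinarith [sq_nonneg θ]

lemma ae_pos {π : Measure ℝ} (hsupp : π (Iic 0) = 0) : ∀ᵐ θ ∂π, 0 < θ := by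
  have h : {θ : ℝ | ¬ 0 < θ} = Iic 0 := by ext θ; simp [not_lt]
  rw [ae_iff, h]; exact hsupp

lemma integrable_f {π : Measure ℝ} (hsupp : π (Iic 0) = 0)
    (hint : Integrable (fun θ => min θ (θ ^ 2)) π) {l : ℝ} (hl : 0 ≤ l) :
    Integrable (fun θ => Real.exp (-l * θ) - 1 + l * θ) π := by
  refine (hint.const_mul (max l (l ^ 2))).mono' ?_ ?_
  · exact Continuous.aestronglyMeasurable (by fun_prop)
  · filter_upwards [ae_pos hsupp] with θ hθ
    exact f_bound hl le_rfl hθ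

lemma measure_Ioi_lt_top {π : Measure ℝ} (hint : Integrable (fun θ => min θ (θ ^ 2)) π)
    {r : ℝ} (hr : 0 < r) : π (Ioi r) < ⊤ := by
  have h1 : Ioi r ⊆ {θ : ℝ | min r (r ^ 2) ≤ min θ (θ ^ 2)} := by
    intro θ (hθ : r < θ)
    exact min_le_min hθ.le (by nlinarith)
  exact lt_of_le_of_lt (measure_mono h1) (hint.measure_ge_lt_top (by positivity))

lemma integrableOn_g {π : Measure ℝ} (hint : Integrable (fun θ => min θ (θ ^ 2)) π)
    {r l : ℝ} (hr : 0 < r) (hl : 0 ≤ l) :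
    IntegrableOn (fun θ => 1 - Real.exp (-l * θ)) (Ioi r) π := by
  refine (integrableOn_const (C := (1:ℝ)) (measure_Ioi_lt_top hint hr).ne).mono' ?_ ?_
  · exact Continuous.aestronglyMeasurable (by fun_prop)
  · filter_upwards [ae_restrict_mem measurableSet_Ioi] with θ hθ
    have hθ0 : 0 < θ := lt_trans hr hθ
    have h1 := g_nonneg (l := l) (θ := θ) (mul_nonneg hl hθ0.le)
    have h2 := g_le_one l θ
    rw [Real.norm_eq_abs, abs_of_nonneg h1]; exact h2

lemma Phi_le_PhiIoi (α β : ℝ) (π : Measure ℝ) {r l : ℝ} (hr : 0 < r) (hl : 0 ≤ l) :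
    Phi α β π l ≤ PhiIoi α β π r l := by
  have h : 0 ≤ ∫ θ in Ioi r, (1 - Real.exp (-l * θ)) ∂π := by
    refine setIntegral_nonneg measurableSet_Ioi (fun θ hθ => ?_)
    exact g_nonneg (mul_nonneg hl (le_trans hr.le (le_of_lt hθ)))
  unfold PhiIoi; linarith

lemma PhiIoi_le (α β : ℝ) {π : Measure ℝ} (hint : Integrable (fun θ => min θ (θ ^ 2)) π)
    {r l : ℝ} (hr : 0 < r) (hl : 0 ≤ l) :
    PhiIoi α β π r l ≤ Phi α β π l + (π (Ioi r)).toReal := by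
  have h : ∫ θ in Ioi r, (1 - Real.exp (-l * θ)) ∂π ≤ (π (Ioi r)).toReal := by
    have h1 := setIntegral_mono_on (integrableOn_g hint hr hl)
      (integrableOn_const (measure_Ioi_lt_top hint hr).ne)
      measurableSet_Ioi (fun θ _ => g_le_one l θ)
    rwa [setIntegral_const, smul_eq_mul, mul_one] at h1
  unfold PhiIoi; linarith

end TruncAux

namespace TruncAux

lemma continuousOn_Phi (α β : ℝ) {π : Measure ℝ} (hsupp : π (Iic 0) = 0)
    (hint : Integrable (fun θ => min θ (θ ^ 2)) π) {c : ℝ} (hc : 0 ≤ c) :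
    ContinuousOn (Phi α β π) (Icc 0 c) := by
  unfold Phi
  refine ContinuousOn.add ((Continuous.continuousOn (by fun_prop)) :
    ContinuousOn (fun l : ℝ => α * l + β * l ^ 2) (Icc 0 c)) ?_
  apply continuousOn_of_dominated (bound := fun θ => max c (c ^ 2) * min θ (θ ^ 2))
  · intro l _
    exact Continuous.aestronglyMeasurable (by fun_prop)
  · intro l hl
    filter_upwards [ae_pos hsupp] with θ hθ
    exact f_bound hl.1 hl.2 hθ
  · exact hint.const_mul _
  · filter_upwards with θ
    exact Continuous.continuousOn (by fun_prop)

lemma continuousOn_PhiIoi (α β : ℝ) {π : Measure ℝ} (hsupp : π (Iic 0) = 0)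
    (hint : Integrable (fun θ => min θ (θ ^ 2)) π) {r c : ℝ} (hr : 0 < r) (hc : 0 ≤ c) :
    ContinuousOn (PhiIoi α β π r) (Icc 0 c) := by
  unfold PhiIoi
  refine ContinuousOn.add (continuousOn_Phi α β hsupp hint hc) ?_
  apply continuousOn_of_dominated (bound := fun _ => (1:ℝ))
  · intro l _
    exact Continuous.aestronglyMeasurable (by fun_prop)
  · intro l hl
    filter_upwards [ae_restrict_mem measurableSet_Ioi] with θ hθ
    have hθ0 : 0 < θ := lt_trans hr hθ
    have h1 := g_nonneg (l := l) (θ := θ) (mul_nonneg hl.1 hθ0.le)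
    have h2 := g_le_one l θ
    rw [Real.norm_eq_abs, abs_of_nonneg h1]; exact h2
  · exact integrableOn_const (C := (1:ℝ)) (measure_Ioi_lt_top hint hr).ne
  · filter_upwards with θ
    exact Continuous.continuousOn (by fun_prop)

lemma exp_combo {u v a b : ℝ} (ha : 0 ≤ a) (hb : 0 ≤ b) (hab : a + b = 1) :
    Real.exp (a * u + b * v) ≤ a * Real.exp u + b * Real.exp v := by
  have := convexOn_exp.2 (mem_univ u) (mem_univ v) ha hb hab
  simpa [smul_eq_mul] using this

lemma f_combo (θ : ℝ) {x y a b : ℝ} (ha : 0 ≤ a) (hb : 0 ≤ b) (hab : a + b = 1) :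
    Real.exp (-(a * x + b * y) * θ) - 1 + (a * x + b * y) * θ ≤
      a * (Real.exp (-x * θ) - 1 + x * θ) + b * (Real.exp (-y * θ) - 1 + y * θ) := by
  have h := exp_combo (u := -x * θ) (v := -y * θ) ha hb hab
  have e : -(a * x + b * y) * θ = a * (-x * θ) + b * (-y * θ) := by ring
  rw [e]
  nlinarith [h]

lemma int_f_combo {π : Measure ℝ} (hsupp : π (Iic 0) = 0)
    (hint : Integrable (fun θ => min θ (θ ^ 2)) π) {x y a b : ℝ}
    (hx : 0 ≤ x) (hy : 0 ≤ y) (ha : 0 ≤ a) (hb : 0 ≤ b) (hab : a + b = 1) :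
    ∫ θ, (Real.exp (-(a * x + b * y) * θ) - 1 + (a * x + b * y) * θ) ∂π ≤
      a * ∫ θ, (Real.exp (-x * θ) - 1 + x * θ) ∂π +
      b * ∫ θ, (Real.exp (-y * θ) - 1 + y * θ) ∂π := by
  have hintm := integrable_f hsupp hint (l := a * x + b * y) (by positivity)
  have hintx := integrable_f hsupp hint hx
  have hinty := integrable_f hsupp hint hy
  have hsum : Integrable (fun θ => a * (Real.exp (-x * θ) - 1 + x * θ) +
      b * (Real.exp (-y * θ) - 1 + y * θ)) π := (hintx.const_mul a).add (hinty.const_mul b)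
  have h2 := integral_mono hintm hsum (fun θ => f_combo θ ha hb hab)
  rwa [integral_add (hintx.const_mul a) (hinty.const_mul b),
    integral_const_mul, integral_const_mul] at h2

lemma phi_convex (α : ℝ) {β : ℝ} (hβ : 0 ≤ β) {π : Measure ℝ} (hsupp : π (Iic 0) = 0)
    (hint : Integrable (fun θ => min θ (θ ^ 2)) π) {x y a b : ℝ}
    (hx : 0 ≤ x) (hy : 0 ≤ y) (ha : 0 ≤ a) (hb : 0 ≤ b) (hab : a + b = 1) :
    Phi α β π (a * x + b * y) ≤ a * Phi α β π x + b * Phi α β π y := by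
  unfold Phi
  have h2 := int_f_combo hsupp hint hx hy ha hb hab
  have h3 : (a * x + b * y) ^ 2 ≤ a * x ^ 2 + b * y ^ 2 := by
    nlinarith [mul_nonneg (mul_nonneg ha hb) (sq_nonneg (x - y))]
  have h4 : β * (a * x + b * y) ^ 2 ≤ β * (a * x ^ 2 + b * y ^ 2) :=
    mul_le_mul_of_nonneg_left h3 hβ
  nlinarith [h2, h4]

lemma exp_strict {u v : ℝ} (huv : u ≠ v) :
    Real.exp ((u + v) / 2) < (Real.exp u + Real.exp v) / 2 := by
  have h1 : Real.exp ((u + v) / 2) = Real.exp (u / 2) * Real.exp (v / 2) := by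
    rw [← Real.exp_add]; ring_nf
  have h2 : Real.exp u = Real.exp (u / 2) ^ 2 := by
    rw [sq, ← Real.exp_add]; ring_nf
  have h3 : Real.exp v = Real.exp (v / 2) ^ 2 := by
    rw [sq, ← Real.exp_add]; ring_nf
  have h4 : Real.exp (u / 2) ≠ Real.exp (v / 2) := fun h => huv (by
    have := Real.exp_eq_exp.1 h; linarith)
  have h5 : 0 < (Real.exp (u / 2) - Real.exp (v / 2)) ^ 2 :=
    sq_pos_of_ne_zero (sub_ne_zero.2 h4)
  nlinarith [h1, h2, h3, h5]

lemma Phi_zero (α β : ℝ) (π : Measure ℝ) : Phi α β π 0 = 0 := by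
  unfold Phi; simp

lemma phi_strict_mid (α : ℝ) {β : ℝ} (hβ : 0 ≤ β) {π : Measure ℝ} (hsupp : π (Iic 0) = 0)
    (hint : Integrable (fun θ => min θ (θ ^ 2)) π)
    (hpos : 0 < β ∨ 0 < π (Ioi 0)) {x y : ℝ} (hx : 0 ≤ x) (hxy : x < y)
    (hfx : Phi α β π x = 0) (hfy : Phi α β π y = 0) :
    Phi α β π ((x + y) / 2) < 0 := by
  have hy : 0 ≤ y := le_trans hx hxy.le
  have hmeq : (1/2 : ℝ) * x + (1/2 : ℝ) * y = (x + y) / 2 := by ring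
  rcases hpos with hβpos | hπpos
  · -- strict from the β λ² term
    have h2 : ∫ θ, (Real.exp (-((1/2:ℝ) * x + (1/2:ℝ) * y) * θ) - 1 +
        ((1/2:ℝ) * x + (1/2:ℝ) * y) * θ) ∂π ≤
        (1/2) * ∫ θ, (Real.exp (-x * θ) - 1 + x * θ) ∂π +
        (1/2) * ∫ θ, (Real.exp (-y * θ) - 1 + y * θ) ∂π :=
      int_f_combo hsupp hint hx hy (by norm_num) (by norm_num) (by norm_num)
    rw [hmeq] at h2
    have h3 : ((x + y) / 2) ^ 2 < (1/2) * x ^ 2 + (1/2) * y ^ 2 := by nlinarith [sq_nonneg (x - y)]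
    have hxv : Phi α β π x = α * x + β * x ^ 2 + ∫ θ, (Real.exp (-x * θ) - 1 + x * θ) ∂π := rfl
    have hyv : Phi α β π y = α * y + β * y ^ 2 + ∫ θ, (Real.exp (-y * θ) - 1 + y * θ) ∂π := rfl
    have hmv : Phi α β π ((x + y)/2) = α * ((x + y)/2) + β * ((x + y)/2) ^ 2 +
        ∫ θ, (Real.exp (-((x + y)/2) * θ) - 1 + ((x + y)/2) * θ) ∂π := rfl
    rw [hmv]
    rw [hxv] at hfx
    rw [hyv] at hfy
    linarith [h2, mul_lt_mul_of_pos_left h3 hβpos]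
  · -- strict from the jump integral
    set m := (x + y) / 2 with hm
    have hm0 : 0 ≤ m := by rw [hm]; linarith
    have hintx := integrable_f hsupp hint hx
    have hinty := integrable_f hsupp hint hy
    have hintm := integrable_f hsupp hint hm0
    set h : ℝ → ℝ := fun θ =>
      ((Real.exp (-x * θ) - 1 + x * θ) + (Real.exp (-y * θ) - 1 + y * θ)) / 2 -
        (Real.exp (-m * θ) - 1 + m * θ) with hdef
    have hnn : ∀ θ, 0 ≤ h θ := by
      intro θ
      have := f_combo θ (x := x) (y := y) (a := (1/2:ℝ)) (b := (1/2:ℝ))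
        (by norm_num) (by norm_num) (by norm_num)
      rw [hmeq] at this
      simp only [hdef]
      linarith
    have hinth : Integrable h π := ((hintx.add hinty).div_const 2).sub hintm
    have hpos2 : 0 < ∫ θ, h θ ∂π := by
      rw [integral_pos_iff_support_of_nonneg hnn hinth]
      refine lt_of_lt_of_le hπpos (measure_mono ?_)
      intro θ (hθ : 0 < θ)
      have hstrict : Real.exp (-m * θ) < (Real.exp (-x * θ) + Real.exp (-y * θ)) / 2 := by
        have huv : -x * θ ≠ -y * θ := by
          intro hcon
          have : x = y := by
            have := mul_right_cancel₀ (ne_of_gt hθ) hcon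
            linarith
          linarith
        have := exp_strict huv
        have harg : (-x * θ + -y * θ) / 2 = -m * θ := by rw [hm]; ring
        rwa [harg] at this
      have hlin : (x * θ + y * θ) / 2 = m * θ := by rw [hm]; ring
      have : 0 < h θ := by simp only [hdef]; linarith
      exact Function.mem_support.2 (ne_of_gt this)
    have hsplit : ∫ θ, h θ ∂π =
        ((∫ θ, (Real.exp (-x * θ) - 1 + x * θ) ∂π) + ∫ θ, (Real.exp (-y * θ) - 1 + y * θ) ∂π) / 2 -
          ∫ θ, (Real.exp (-m * θ) - 1 + m * θ) ∂π := by
      simp only [hdef]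
      have hfg : Integrable (fun θ => ((Real.exp (-x * θ) - 1 + x * θ) +
          (Real.exp (-y * θ) - 1 + y * θ)) / 2) π := (hintx.add hinty).div_const 2
      rw [integral_sub hfg hintm]
      congr 1
      have h1 : ∫ θ, ((Real.exp (-x * θ) - 1 + x * θ) + (Real.exp (-y * θ) - 1 + y * θ)) ∂π
          = (∫ θ, (Real.exp (-x * θ) - 1 + x * θ) ∂π) + ∫ θ, (Real.exp (-y * θ) - 1 + y * θ) ∂π :=
        integral_add hintx hinty
      rw [integral_div, h1]
    rw [hsplit] at hpos2
    have h3 : m ^ 2 ≤ (1/2) * x ^ 2 + (1/2) * y ^ 2 := by rw [hm]; nlinarith [sq_nonneg (x - y)]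
    have hxv : Phi α β π x = α * x + β * x ^ 2 + ∫ θ, (Real.exp (-x * θ) - 1 + x * θ) ∂π := rfl
    have hyv : Phi α β π y = α * y + β * y ^ 2 + ∫ θ, (Real.exp (-y * θ) - 1 + y * θ) ∂π := rfl
    have hmv : Phi α β π m = α * m + β * m ^ 2 + ∫ θ, (Real.exp (-m * θ) - 1 + m * θ) ∂π := rfl
    rw [hmv]
    rw [hxv] at hfx; rw [hyv] at hfy
    have hβ3 : β * m ^ 2 ≤ β * ((1/2) * x ^ 2 + (1/2) * y ^ 2) := mul_le_mul_of_nonneg_left h3 hβ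
    have hmlin : α * m = (α * x + α * y) / 2 := by rw [hm]; ring
    nlinarith [hpos2, hβ3]

end TruncAux

open TruncAux

/-- Under Assumption H0, the truncated mechanisms satisfy H0 and
`(Φ^{(r,∞)})⁻¹(π((r,∞))) → q = Φ⁻¹(0)` and `(Φ^{(r,∞)})⁻¹(0) → Φ⁻¹(0)` as `r → ∞`,
where `q` is the largest root of `Φ` and the inverse value `(Φ^{(r,∞)})⁻¹(a)` is
characterized as the largest nonnegative root of `Φ^{(r,∞)}(·) = a`. -/
theorem truncated_inverse_limit
    (α β : ℝ) (hβ : 0 ≤ β) (π : Measure ℝ)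
    (hsupp : π (Set.Iic 0) = 0) (hσ : SigmaFinite π)
    (hint : Integrable (fun θ => min θ (θ ^ 2)) π)
    (hH0 : ∃ l : ℝ, 0 < l ∧ 0 < Phi α β π l)
    (q : ℝ) (hq0 : 0 ≤ q) (hqroot : Phi α β π q = 0)
    (hqmax : ∀ a : ℝ, 0 ≤ a → Phi α β π a = 0 → a ≤ q) :
    (∀ r : ℝ, 0 < r → ∃ l : ℝ, 0 < l ∧ 0 < PhiIoi α β π r l) ∧
    (∀ inv : ℝ → ℝ → ℝ,
      (∀ r : ℝ, 0 < r → ∀ a : ℝ, 0 ≤ a →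
        0 ≤ inv r a ∧ PhiIoi α β π r (inv r a) = a ∧
        (∀ b : ℝ, 0 ≤ b → PhiIoi α β π r b = a → b ≤ inv r a)) →
      Tendsto (fun r => inv r ((π (Set.Ioi r)).toReal)) atTop (nhds q) ∧
      Tendsto (fun r => inv r 0) atTop (nhds q)) := by
  constructor
  · intro r hr
    obtain ⟨l, hl, hΦl⟩ := hH0
    exact ⟨l, hl, lt_of_lt_of_le hΦl (Phi_le_PhiIoi α β π hr hl.le)⟩
  · intro inv hinv
    have hεnn : ∀ r : ℝ, (0:ℝ) ≤ (π (Ioi r)).toReal := fun r => ENNReal.toReal_nonneg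
    have hminae : 0 ≤ᶠ[ae π] fun θ => min θ (θ ^ 2) := by
      filter_upwards [ae_pos hsupp] with θ hθ
      exact le_min hθ.le (by positivity)
    have hkey : ∀ r : ℝ, 1 ≤ r →
        (π (Ioi r)).toReal ≤ (∫ θ, min θ (θ ^ 2) ∂π) / r := by
      intro r hr1
      have hr : (0:ℝ) < r := lt_of_lt_of_le one_pos hr1
      have hfin := measure_Ioi_lt_top hint hr
      have hconst : IntegrableOn (fun _ : ℝ => r) (Ioi r) π :=
        integrableOn_const (C := r) hfin.ne
      have h2 := setIntegral_mono_on hconst hint.integrableOn measurableSet_Ioi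
        (fun θ hθ => by
          have hθ' : r < θ := mem_Ioi.1 hθ
          exact le_min hθ'.le (by nlinarith))
      rw [setIntegral_const, smul_eq_mul] at h2
      exact (le_div_iff₀ hr).2 (le_trans h2 (setIntegral_le_integral hint hminae))
    have hεlim : Tendsto (fun r : ℝ => (π (Ioi r)).toReal) atTop (nhds 0) := by
      apply squeeze_zero' (Eventually.of_forall hεnn) (eventually_atTop.2 ⟨1, hkey⟩)
      exact Tendsto.div_atTop tendsto_const_nhds tendsto_id
    -- Lemma B: Phi takes arbitrarily large values arbitrarily far to the right
    have lemB : ∀ c : ℝ, 0 ≤ c → ∀ C : ℝ, ∃ t, c < t ∧ C < Phi α β π t := by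
      intro c hc C
      obtain ⟨z, hz, hzmax⟩ := isCompact_Icc.exists_isMaxOn (nonempty_Icc.2 hc)
        (continuousOn_Phi α β hsupp hint hc)
      set M := Phi α β π z with hM
      set a := max (max C M) 0 + (π (Ioi 1)).toReal + 1 with ha
      have ha0 : 0 ≤ a := by
        have h1 := le_max_right (max C M) 0
        have h2 := hεnn 1
        linarith
      obtain ⟨ht0, hteq, -⟩ := hinv 1 one_pos a ha0
      have h1 : PhiIoi α β π 1 (inv 1 a) ≤ Phi α β π (inv 1 a) + (π (Ioi 1)).toReal :=
        PhiIoi_le α β hint one_pos ht0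
      rw [hteq] at h1
      have hΦt : max (max C M) 0 + 1 ≤ Phi α β π (inv 1 a) := by linarith
      have htc : c < inv 1 a := by
        by_contra hcon
        push_neg at hcon
        have h5 : Phi α β π (inv 1 a) ≤ M := hzmax ⟨ht0, hcon⟩
        have h3 := le_max_right C M
        have h4 := le_max_left (max C M) 0
        linarith
      refine ⟨inv 1 a, htc, ?_⟩
      have h3 := le_max_left C M
      have h4 := le_max_left (max C M) 0
      linarith
    -- Phi is strictly positive to the right of q
    have hqpos : ∀ d : ℝ, q < d → 0 < Phi α β π d := by
      intro d hd
      have hd0 : 0 ≤ d := le_trans hq0 hd.le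
      rcases lt_trichotomy (Phi α β π d) 0 with h | h | h
      · obtain ⟨t, htd, hΦt⟩ := lemB d hd0 0
        have ht0 : 0 ≤ t := le_trans hd0 htd.le
        have hcont : ContinuousOn (Phi α β π) (Icc d t) :=
          (continuousOn_Phi α β hsupp hint ht0).mono (Icc_subset_Icc hd0 le_rfl)
        obtain ⟨z, hz, hzeq⟩ := intermediate_value_Icc htd.le hcont ⟨h.le, hΦt.le⟩
        have := hqmax z (le_trans hd0 hz.1) hzeq
        linarith [hz.1]
      · exact absurd (hqmax d hd0 h) (not_le.2 hd)
      · exact h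
    -- Phi is ≥ Phi d on [d, ∞) for d > q
    have hmono : ∀ d : ℝ, q < d → ∀ l : ℝ, d ≤ l → Phi α β π d ≤ Phi α β π l := by
      intro d hd l hl
      rcases eq_or_lt_of_le hl with rfl | hl'
      · exact le_rfl
      set t := (d - q) / (l - q) with hts
      have hlq : (0:ℝ) < l - q := by linarith
      have ht0 : 0 < t := div_pos (by linarith) hlq
      have ht1 : t ≤ 1 := (div_le_one hlq).2 (by linarith)
      have hcomb := phi_convex α hβ hsupp hint hq0 (le_trans hq0 (le_trans hd.le hl))
        (by linarith : (0:ℝ) ≤ 1 - t) ht0.le (by ring)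
      have hcanc : t * (l - q) = d - q := div_mul_cancel₀ _ (ne_of_gt hlq)
      have harg : (1 - t) * q + t * l = d := by linear_combination hcanc
      rw [harg, hqroot] at hcomb
      have hcomb' : Phi α β π d ≤ t * Phi α β π l := by linarith [hcomb]
      have hPd := hqpos d hd
      have hPl : 0 < Phi α β π l := by
        by_contra hcon
        push_neg at hcon
        nlinarith [mul_nonpos_of_nonneg_of_nonpos ht0.le hcon]
      linarith [mul_le_mul_of_nonneg_right ht1 hPl.le]
    -- a point T > q where Phi exceeds the tail mass at level 1
    obtain ⟨T, hTq, hTval⟩ := lemB q hq0 ((π (Ioi 1)).toReal)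
    have hT0 : 0 ≤ T := le_trans hq0 hTq.le
    -- uniform upper bound
    have upper : ∀ δ : ℝ, 0 < δ → ∀ r : ℝ, 0 < r → ∀ a : ℝ, 0 ≤ a →
        a < Phi α β π (q + δ) → inv r a < q + δ := by
      intro δ hδ r hr a ha hlt
      obtain ⟨hu0, hueq, -⟩ := hinv r hr a ha
      by_contra hcon
      push_neg at hcon
      have h1 := hmono (q + δ) (by linarith) (inv r a) hcon
      have h2 := Phi_le_PhiIoi α β π hr hu0
      rw [hueq] at h2
      linarith
    -- lower bound for the tail-mass sequence
    have lowerε : ∀ r : ℝ, 1 ≤ r → q ≤ inv r ((π (Ioi r)).toReal) := by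
      intro r hr1
      have hr : (0:ℝ) < r := lt_of_lt_of_le one_pos hr1
      have hale : (π (Ioi r)).toReal ≤ (π (Ioi 1)).toReal :=
        ENNReal.toReal_mono (ne_of_lt (measure_Ioi_lt_top hint one_pos))
          (measure_mono (Ioi_subset_Ioi hr1))
      obtain ⟨hu0, hueq, humax⟩ := hinv r hr ((π (Ioi r)).toReal) (hεnn r)
      have hcont : ContinuousOn (PhiIoi α β π r) (Icc q T) :=
        (continuousOn_PhiIoi α β hsupp hint hr hT0).mono (Icc_subset_Icc hq0 le_rfl)
      have hlow : PhiIoi α β π r q ≤ (π (Ioi r)).toReal := by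
        have := PhiIoi_le α β hint hr hq0
        rw [hqroot] at this
        linarith
      have hhigh : (π (Ioi r)).toReal ≤ PhiIoi α β π r T := by
        have := Phi_le_PhiIoi α β π (l := T) hr hT0
        linarith
      obtain ⟨z, hz, hzeq⟩ := intermediate_value_Icc hTq.le hcont ⟨hlow, hhigh⟩
      have := humax z (le_trans hq0 hz.1) hzeq
      linarith [hz.1]
    -- lower bound for the 0 sequence
    have lower0 : ∀ δ : ℝ, 0 < δ → ∀ᶠ r : ℝ in atTop, q - δ ≤ inv r 0 := by
      intro δ hδ
      rcases eq_or_lt_of_le hq0 with hq | hq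
      · filter_upwards [eventually_ge_atTop (1:ℝ)] with r hr1
        have hr : (0:ℝ) < r := lt_of_lt_of_le one_pos hr1
        have := (hinv r hr 0 le_rfl).1
        linarith
      · have hst : 0 < β ∨ 0 < π (Ioi 0) := by
          by_contra hcon
          push_neg at hcon
          have hβ0 : β = 0 := le_antisymm hcon.1 hβ
          have hπ0 : π (Ioi 0) = 0 := le_antisymm hcon.2 zero_le
          have hπz : π = 0 := by
            have h := measure_union_le (μ := π) (Iic (0:ℝ)) (Ioi (0:ℝ))
            rw [hsupp, hπ0, Iic_union_Ioi] at h
            simp only [add_zero, nonpos_iff_eq_zero] at h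
            exact Measure.measure_univ_eq_zero.1 h
          have hPhi : ∀ l : ℝ, Phi α β π l = α * l := by
            intro l
            unfold Phi
            rw [hπz, hβ0]
            simp
          have hα : α = 0 := by
            have h := hqroot
            rw [hPhi q] at h
            rcases mul_eq_zero.1 h with h' | h'
            · exact h'
            · exact absurd h' (ne_of_gt hq)
          obtain ⟨l₀, hl₀, hΦl₀⟩ := hH0
          rw [hPhi l₀, hα] at hΦl₀
          simp at hΦl₀
        set δ' := min δ q with hδ'
        have hδ'0 : 0 < δ' := lt_min hδ hq
        have hδ'q : δ' ≤ q := min_le_right _ _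
        have hδ'δ : δ' ≤ δ := min_le_left _ _
        set m := q - δ' / 2 with hmdef
        have hm0 : 0 ≤ m := by simp only [hmdef]; linarith
        have hmq : m < q := by simp only [hmdef]; linarith
        have hmle : Phi α β π m ≤ 0 := by
          have hb : 0 ≤ m / q := by positivity
          have hb1 : m / q ≤ 1 := (div_le_one hq).2 hmq.le
          have hcomb := phi_convex α hβ hsupp hint (le_refl (0:ℝ)) hq0
            (by linarith : (0:ℝ) ≤ 1 - m / q) hb (by ring)
          have harg : (1 - m / q) * 0 + m / q * q = m := by
            rw [mul_zero, zero_add]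
            exact div_mul_cancel₀ _ (ne_of_gt hq)
          rw [harg, hqroot, Phi_zero] at hcomb
          linarith
        obtain ⟨c, hc0, hcq, hcge, hcneg⟩ :
            ∃ c : ℝ, 0 ≤ c ∧ c < q ∧ q - δ' ≤ c ∧ Phi α β π c < 0 := by
          rcases lt_or_eq_of_le hmle with h | h
          · exact ⟨m, hm0, hmq, by simp only [hmdef]; linarith, h⟩
          · refine ⟨(m + q) / 2, by linarith, by linarith, by simp only [hmdef]; linarith, ?_⟩
            exact phi_strict_mid α hβ hsupp hint hst hm0 hmq h hqroot
        filter_upwards [eventually_ge_atTop (1:ℝ),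
          hεlim.eventually_lt_const (by linarith : (0:ℝ) < -Phi α β π c)] with r hr1 hrε
        have hr : (0:ℝ) < r := lt_of_lt_of_le one_pos hr1
        obtain ⟨hv0, hveq, hvmax⟩ := hinv r hr 0 le_rfl
        have hcT : c ≤ T := le_trans hcq.le hTq.le
        have hcont : ContinuousOn (PhiIoi α β π r) (Icc c T) :=
          (continuousOn_PhiIoi α β hsupp hint hr hT0).mono (Icc_subset_Icc hc0 le_rfl)
        have hlow : PhiIoi α β π r c ≤ 0 := by
          have := PhiIoi_le α β hint hr hc0
          linarith
        have hhigh : (0:ℝ) ≤ PhiIoi α β π r T := by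
          have h1 := Phi_le_PhiIoi α β π (l := T) hr hT0
          linarith [hεnn 1]
        obtain ⟨z, hz, hzeq⟩ := intermediate_value_Icc hcT hcont ⟨hlow, hhigh⟩
        have := hvmax z (le_trans hc0 hz.1) hzeq
        linarith [hz.1]
    constructor
    · rw [Metric.tendsto_nhds]
      intro δ hδ
      have hP : 0 < Phi α β π (q + δ / 2) := hqpos _ (by linarith)
      filter_upwards [eventually_ge_atTop (1:ℝ), hεlim.eventually_lt_const hP] with r hr1 hrε
      have hr : (0:ℝ) < r := lt_of_lt_of_le one_pos hr1
      have h1 := lowerε r hr1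
      have h2 := upper (δ / 2) (by linarith) r hr ((π (Ioi r)).toReal) (hεnn r) hrε
      rw [Real.dist_eq, abs_of_nonneg (by linarith)]
      linarith
    · rw [Metric.tendsto_nhds]
      intro δ hδ
      have hP : 0 < Phi α β π (q + δ / 2) := hqpos _ (by linarith)
      filter_upwards [eventually_ge_atTop (1:ℝ), lower0 (δ / 2) (by linarith)] with r hr1 hrlow
      have hr : (0:ℝ) < r := lt_of_lt_of_le one_pos hr1
      have h2 := upper (δ / 2) (by linarith) r hr 0 le_rfl hP
      rw [Real.dist_eq, abs_lt]
      exact ⟨by linarith, by linarith⟩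
end

section
/- (Key strict inequality for Theorem 3.8.) Let Φ be a (sub)critical branching mechanism (α ≥ 0) with Lévy measure π, and let 0 < r < r' < ∞ be such that π((r,r')) > 0. Then Φ satisfies Assumption H0 with largest root q = 0, the inverses (Φ^{(r,∞)})^{−1} and (Φ^{[r',∞)})^{−1} are well-defined on [0,∞), and (Φ^{(r,∞)})^{−1}(π((r,∞))) > (Φ^{[r',∞)})^{−1}(π([r',∞))). -/
open MeasureTheory Filter Set

/-- The `[r,∞)`-truncated branching mechanism
`Φ^{[r,∞)}(λ) = Φ(λ) + ∫_{[r,∞)} (1 - e^{-λθ}) π(dθ)`. -/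
noncomputable def PhiIci (α β : ℝ) (π : Measure ℝ) (r lam : ℝ) : ℝ :=
  Phi α β π lam + ∫ θ in Set.Ici r, (1 - Real.exp (-lam * θ)) ∂π


open Topology

set_option linter.unusedSectionVars false

lemma F_nonneg (x : ℝ) : 0 ≤ Real.exp (-x) - 1 + x := by
  have := Real.add_one_le_exp (-x); linarith
lemma F_le_self {x : ℝ} (hx : 0 ≤ x) : Real.exp (-x) - 1 + x ≤ x := by
  have := Real.exp_le_one_iff.2 (neg_nonpos.2 hx); linarith
lemma F_le_sq {x : ℝ} (hx : 0 ≤ x) : Real.exp (-x) - 1 + x ≤ x ^ 2 := by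
  have h1 : x + 1 ≤ Real.exp x := Real.add_one_le_exp x
  have h2 : Real.exp (-x) * Real.exp x = 1 := by rw [← Real.exp_add]; simp
  have h4 : 0 ≤ Real.exp (-x) := (Real.exp_pos _).le
  nlinarith [mul_nonneg hx (mul_nonneg hx hx), mul_le_mul_of_nonneg_left h1 h4]

lemma F_mono {x y : ℝ} (hx : 0 ≤ x) (hxy : x ≤ y) :
    Real.exp (-x) - 1 + x ≤ Real.exp (-y) - 1 + y := by
  have h1 : Real.exp (-y) = Real.exp (-x) * Real.exp (-(y - x)) := by
    rw [← Real.exp_add]; ring_nf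
  have h2 : Real.exp (-x) ≤ 1 := Real.exp_le_one_iff.2 (neg_nonpos.2 hx)
  have h3 : -(y - x) + 1 ≤ Real.exp (-(y - x)) := Real.add_one_le_exp _
  have h4 : Real.exp (-(y - x)) ≤ 1 := Real.exp_le_one_iff.2 (by linarith)
  have h5 : 0 ≤ Real.exp (-x) := (Real.exp_pos _).le
  nlinarith

lemma F_pos {x : ℝ} (hx : 0 < x) : 0 < Real.exp (-x) - 1 + x := by
  have := Real.add_one_lt_exp (x := -x) (by linarith); linarith

lemma F_superadd {x y : ℝ} (hx : 0 ≤ x) (hxy : x ≤ y) :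
    Real.exp (-(y - x)) - 1 + (y - x) ≤
      (Real.exp (-y) - 1 + y) - (Real.exp (-x) - 1 + x) := by
  have h1 : Real.exp (-y) = Real.exp (-x) * Real.exp (-(y - x)) := by
    rw [← Real.exp_add]; ring_nf
  have h2 : Real.exp (-x) ≤ 1 := Real.exp_le_one_iff.2 (neg_nonpos.2 hx)
  have h4 : Real.exp (-(y - x)) ≤ 1 := Real.exp_le_one_iff.2 (by linarith)
  have h5 : 0 ≤ Real.exp (-x) := (Real.exp_pos _).le
  nlinarith

lemma cont_F (l : ℝ) : Continuous (fun θ : ℝ => Real.exp (-l * θ) - 1 + l * θ) := by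
  exact ((Real.continuous_exp.comp ((continuous_const.mul continuous_id))).sub
    continuous_const).add (continuous_const.mul continuous_id)

section Meas
variable {π : Measure ℝ} (hsupp : π (Set.Iic 0) = 0)
  (hint : Integrable (fun θ => min θ (θ ^ 2)) π)

include hsupp in
lemma ae_pos : ∀ᵐ θ ∂π, 0 < θ := by
  rw [ae_iff]
  have : {θ : ℝ | ¬ 0 < θ} = Set.Iic 0 := by ext θ; simp
  rw [this]; exact hsupp

include hsupp hint in
lemma integrable_F {l : ℝ} (hl : 0 ≤ l) :
    Integrable (fun θ => Real.exp (-l * θ) - 1 + l * θ) π := by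
  refine ((hint.const_mul (max l (l ^ 2))).mono' (cont_F l).aestronglyMeasurable ?_)
  filter_upwards [ae_pos hsupp] with θ hθ
  have hlθ : 0 ≤ l * θ := mul_nonneg hl hθ.le
  have h0 : 0 ≤ Real.exp (-(l * θ)) - 1 + l * θ := F_nonneg _
  have e : -l * θ = -(l * θ) := by ring
  rw [Real.norm_eq_abs, e, abs_of_nonneg h0]
  rcases le_total θ 1 with h1 | h1
  · have := F_le_sq hlθ
    have hmin : min θ (θ ^ 2) = θ ^ 2 := min_eq_right (by nlinarith)
    rw [hmin]
    calc Real.exp (-(l * θ)) - 1 + l * θ ≤ (l * θ) ^ 2 := this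
      _ ≤ max l (l ^ 2) * θ ^ 2 := by nlinarith [le_max_right l (l ^ 2), sq_nonneg θ]
  · have := F_le_self hlθ
    have hmin : min θ (θ ^ 2) = θ := min_eq_left (by nlinarith)
    rw [hmin]
    calc Real.exp (-(l * θ)) - 1 + l * θ ≤ l * θ := this
      _ ≤ max l (l ^ 2) * θ := by nlinarith [le_max_left l (l ^ 2)]

include hint in
lemma measure_Ioi_lt_top {s : ℝ} (hs : 0 < s) : π (Set.Ioi s) < ⊤ := by
  refine lt_of_le_of_lt (measure_mono ?_) (hint.measure_ge_lt_top (ε := min s (s ^ 2)) (by positivity))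
  intro θ (hθ : s < θ)
  have : min s (s ^ 2) ≤ min θ (θ ^ 2) := le_min (min_le_left _ _ |>.trans hθ.le)
    ((min_le_right _ _).trans (by nlinarith))
  exact this

include hint in
lemma integrableOn_G {l s : ℝ} (hl : 0 ≤ l) (hs : 0 < s) {S : Set ℝ}
    (hS : MeasurableSet S) (hSs : S ⊆ Set.Ioi s) :
    IntegrableOn (fun θ => 1 - Real.exp (-l * θ)) S π := by
  have hfin : π S < ⊤ := lt_of_le_of_lt (measure_mono hSs) (measure_Ioi_lt_top hint hs)
  refine ((integrableOn_const hfin.ne : IntegrableOn (fun _ => (1:ℝ)) S π)).mono'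
    ((by fun_prop : Continuous (fun θ : ℝ => 1 - Real.exp (-l * θ))).aestronglyMeasurable) ?_
  filter_upwards [ae_restrict_mem hS] with θ hθ
  have hθ0 : 0 < θ := hs.trans (hSs hθ)
  have h1 : Real.exp (-l * θ) ≤ 1 := Real.exp_le_one_iff.2 (by nlinarith)
  have h2 : 0 < Real.exp (-l * θ) := Real.exp_pos _
  rw [Real.norm_eq_abs, abs_of_nonneg (by linarith)]
  linarith
end Meas

section PhiL
variable {α β : ℝ} {π : Measure ℝ} {r r' : ℝ}

lemma Phi_zero : Phi α β π 0 = 0 := by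
  simp [Phi]

variable (hα : 0 ≤ α) (hβ : 0 ≤ β) (hsupp : π (Set.Iic 0) = 0)
  (hint : Integrable (fun θ => min θ (θ ^ 2)) π) (hr : 0 < r) (hrr' : r < r')

include hα hβ hsupp hint hr hrr' in
lemma Phi_strict_mono {b b' : ℝ} (hb : 0 ≤ b) (hbb' : b ≤ b') :
    Phi α β π b + (Real.exp (-((b' - b) * r)) - 1 + (b' - b) * r) * (π (Set.Ioo r r')).toReal
      ≤ Phi α β π b' := by
  have hb' : 0 ≤ b' := hb.trans hbb'
  have hI := integrable_F hsupp hint hb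
  have hI' := integrable_F hsupp hint hb'
  have hdiff : Integrable (fun θ => (Real.exp (-b' * θ) - 1 + b' * θ)
      - (Real.exp (-b * θ) - 1 + b * θ)) π := hI'.sub hI
  have hae : ∀ᵐ θ ∂π, 0 ≤ (Real.exp (-b' * θ) - 1 + b' * θ)
      - (Real.exp (-b * θ) - 1 + b * θ) := by
    filter_upwards [ae_pos hsupp] with θ hθ
    have := F_mono (mul_nonneg hb hθ.le) (by nlinarith : b * θ ≤ b' * θ)
    rw [neg_mul, neg_mul]; linarith
  have hfin : π (Set.Ioo r r') ≠ ⊤ :=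
    (lt_of_le_of_lt (measure_mono (Set.Ioo_subset_Ioi_self)) (measure_Ioi_lt_top hint hr)).ne
  have hconst : ∀ θ ∈ Set.Ioo r r',
      (Real.exp (-((b' - b) * r)) - 1 + (b' - b) * r) ≤
        (Real.exp (-b' * θ) - 1 + b' * θ) - (Real.exp (-b * θ) - 1 + b * θ) := by
    intro θ hθ
    have hθ0 : 0 < θ := hr.trans hθ.1
    have h1 : (b' - b) * r ≤ (b' - b) * θ := by nlinarith [hθ.1.le]
    have h2 := F_mono (by nlinarith : (0:ℝ) ≤ (b' - b) * r) h1
    have h3 := F_superadd (mul_nonneg hb hθ0.le) (by nlinarith : b * θ ≤ b' * θ)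
    have e : b' * θ - b * θ = (b' - b) * θ := by ring
    rw [e] at h3
    rw [neg_mul b, neg_mul b']
    linarith
  have hset : (Real.exp (-((b' - b) * r)) - 1 + (b' - b) * r) * (π (Set.Ioo r r')).toReal
      ≤ ∫ θ in Set.Ioo r r', ((Real.exp (-b' * θ) - 1 + b' * θ)
        - (Real.exp (-b * θ) - 1 + b * θ)) ∂π :=
    setIntegral_ge_of_const_le_real measurableSet_Ioo hfin hconst hdiff.integrableOn
  have hle : ∫ θ in Set.Ioo r r', ((Real.exp (-b' * θ) - 1 + b' * θ)
      - (Real.exp (-b * θ) - 1 + b * θ)) ∂π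
      ≤ ∫ θ, ((Real.exp (-b' * θ) - 1 + b' * θ) - (Real.exp (-b * θ) - 1 + b * θ)) ∂π :=
    setIntegral_le_integral hdiff hae
  rw [integral_sub hI' hI] at hle
  have ha1 : α * b ≤ α * b' := by nlinarith
  have ha2 : β * b ^ 2 ≤ β * b' ^ 2 :=
    mul_le_mul_of_nonneg_left (by nlinarith) hβ
  unfold Phi
  linarith

include hsupp hint in
lemma G_mono {s : ℝ} (hs : 0 < s) {S : Set ℝ} (hS : MeasurableSet S) (hSs : S ⊆ Set.Ioi s)
    {b b' : ℝ} (hb : 0 ≤ b) (hbb' : b ≤ b') :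
    ∫ θ in S, (1 - Real.exp (-b * θ)) ∂π ≤ ∫ θ in S, (1 - Real.exp (-b' * θ)) ∂π := by
  refine setIntegral_mono_on (integrableOn_G hint hb hs hS hSs)
    (integrableOn_G hint (hb.trans hbb') hs hS hSs) hS ?_
  intro θ hθ
  have hθ0 : 0 < θ := hs.trans (hSs hθ)
  have : Real.exp (-b' * θ) ≤ Real.exp (-b * θ) := Real.exp_le_exp.2 (by nlinarith)
  linarith
end PhiL

section Cont
variable {π : Measure ℝ} (hsupp : π (Set.Iic 0) = 0)
  (hint : Integrable (fun θ => min θ (θ ^ 2)) π)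

include hsupp hint in
lemma cont_int_F :
    ContinuousOn (fun l => ∫ θ, (Real.exp (-l * θ) - 1 + l * θ) ∂π) (Set.Ici 0) := by
  intro x₀ hx₀
  refine continuousWithinAt_of_dominated (F := fun l θ => Real.exp (-l * θ) - 1 + l * θ)
    (bound := fun θ => Real.exp (-(x₀ + 1) * θ) - 1 + (x₀ + 1) * θ) ?_ ?_ ?_ ?_
  · filter_upwards with l using (cont_F l).aestronglyMeasurable
  · have hev : ∀ᶠ l in 𝓝[Set.Ici 0] x₀, l ∈ Set.Ici (0:ℝ) ∧ l < x₀ + 1 :=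
      Filter.Eventually.and self_mem_nhdsWithin
        (eventually_nhdsWithin_of_eventually_nhds (Iio_mem_nhds (lt_add_one x₀)))
    filter_upwards [hev] with l hl
    filter_upwards [ae_pos hsupp] with θ hθ
    have h0 : 0 ≤ Real.exp (-(l * θ)) - 1 + l * θ := F_nonneg _
    have h1 : l * θ ≤ (x₀ + 1) * θ := by nlinarith [hl.2.le]
    have h2 := F_mono (mul_nonneg hl.1 hθ.le) h1
    rw [neg_mul, Real.norm_eq_abs, abs_of_nonneg h0, neg_mul]
    linarith [h2]
  · exact integrable_F hsupp hint (by linarith [hx₀.out] : (0:ℝ) ≤ x₀ + 1)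
  · filter_upwards with θ
    exact (Continuous.continuousWithinAt (by fun_prop))

include hsupp hint in
lemma cont_int_G {s : ℝ} (hs : 0 < s) {S : Set ℝ} (hS : MeasurableSet S)
    (hSs : S ⊆ Set.Ioi s) :
    ContinuousOn (fun l => ∫ θ in S, (1 - Real.exp (-l * θ)) ∂π) (Set.Ici 0) := by
  have hfin : π S < ⊤ := lt_of_le_of_lt (measure_mono hSs) (measure_Ioi_lt_top hint hs)
  intro x₀ hx₀
  refine continuousWithinAt_of_dominated (F := fun l θ => 1 - Real.exp (-l * θ))
    (bound := fun _ => 1) ?_ ?_ ?_ ?_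
  · filter_upwards with l
    exact ((by fun_prop : Continuous fun θ : ℝ => 1 - Real.exp (-l * θ))).aestronglyMeasurable
  · filter_upwards [self_mem_nhdsWithin] with l hl
    filter_upwards [ae_restrict_mem hS] with θ hθ
    have hθ0 : 0 < θ := hs.trans (hSs hθ)
    have h1 : Real.exp (-l * θ) ≤ 1 := Real.exp_le_one_iff.2 (by nlinarith [hl.out])
    have h2 : 0 < Real.exp (-l * θ) := Real.exp_pos _
    rw [Real.norm_eq_abs, abs_of_nonneg (by linarith)]
    linarith
  · exact integrableOn_const hfin.ne
  · filter_upwards with θ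
    exact (Continuous.continuousWithinAt (by fun_prop))
end Cont

section T
variable {α β : ℝ} {π : Measure ℝ} {r r' : ℝ}
variable (hα : 0 ≤ α) (hβ : 0 ≤ β) (hsupp : π (Set.Iic 0) = 0)
  (hint : Integrable (fun θ => min θ (θ ^ 2)) π) (hr : 0 < r) (hrr' : r < r')
  (hππ : 0 < π (Set.Ioo r r'))
  {S : Set ℝ} (hS : MeasurableSet S) (hSs : S ⊆ Set.Ioi r)

set_option linter.unusedSectionVars false

lemma T_zero (hS : MeasurableSet S) :
    Phi α β π 0 + ∫ θ in S, (1 - Real.exp (-(0:ℝ) * θ)) ∂π = 0 := by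
  simp [Phi_zero]

include hα hβ hsupp hint hr hrr' hππ hS hSs in
lemma T_strict_mono {b b' : ℝ} (hb : 0 ≤ b) (hbb' : b < b') :
    Phi α β π b + ∫ θ in S, (1 - Real.exp (-b * θ)) ∂π
      < Phi α β π b' + ∫ θ in S, (1 - Real.exp (-b' * θ)) ∂π := by
  have hfin : π (Set.Ioo r r') ≠ ⊤ :=
    (lt_of_le_of_lt (measure_mono Set.Ioo_subset_Ioi_self) (measure_Ioi_lt_top hint hr)).ne
  have hm : 0 < (π (Set.Ioo r r')).toReal := ENNReal.toReal_pos hππ.ne' hfin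
  have hc : 0 < Real.exp (-((b' - b) * r)) - 1 + (b' - b) * r :=
    F_pos (by nlinarith)
  have h1 := Phi_strict_mono hα hβ hsupp hint hr hrr' (b := b) (b' := b') hb hbb'.le
  have h2 := G_mono hsupp hint hr hS hSs hb hbb'.le
  nlinarith [mul_pos hc hm]

include hα hβ hsupp hint hr hrr' hππ hS hSs in
lemma T_mono {b b' : ℝ} (hb : 0 ≤ b) (hbb' : b ≤ b') :
    Phi α β π b + ∫ θ in S, (1 - Real.exp (-b * θ)) ∂π
      ≤ Phi α β π b' + ∫ θ in S, (1 - Real.exp (-b' * θ)) ∂π := by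
  rcases eq_or_lt_of_le hbb' with h | h
  · subst h; exact le_rfl
  · exact (T_strict_mono hα hβ hsupp hint hr hrr' hππ hS hSs hb h).le

include hα hβ hsupp hint hr hrr' hππ hS hSs in
lemma T_cont :
    ContinuousOn (fun l => Phi α β π l + ∫ θ in S, (1 - Real.exp (-l * θ)) ∂π)
      (Set.Ici 0) := by
  unfold Phi
  exact (((continuous_const.mul continuous_id).add
      ((continuous_const.mul (continuous_pow 2))) |>.continuousOn).add
      (cont_int_F hsupp hint)).add (cont_int_G hsupp hint hr hS hSs)

include hα hβ hsupp hint hr hrr' hππ hS hSs in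
lemma T_growth (a : ℝ) :
    ∃ L : ℝ, 0 ≤ L ∧ a ≤ Phi α β π L + ∫ θ in S, (1 - Real.exp (-L * θ)) ∂π := by
  have hfin : π (Set.Ioo r r') ≠ ⊤ :=
    (lt_of_le_of_lt (measure_mono Set.Ioo_subset_Ioi_self) (measure_Ioi_lt_top hint hr)).ne
  set m := (π (Set.Ioo r r')).toReal with hm_def
  have hm : 0 < m := ENNReal.toReal_pos hππ.ne' hfin
  set L := max 0 ((a / m + 1) / r) with hL_def
  have hL0 : 0 ≤ L := le_max_left _ _
  refine ⟨L, hL0, ?_⟩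
  have hIF := integrable_F hsupp hint hL0
  -- lower bound for the main integral
  have h1 : (L * r - 1) * m ≤ ∫ θ in Set.Ioo r r',
      (Real.exp (-L * θ) - 1 + L * θ) ∂π := by
    refine setIntegral_ge_of_const_le_real measurableSet_Ioo hfin ?_ hIF.integrableOn
    intro θ hθ
    have h2 : L * r ≤ L * θ := by nlinarith [hθ.1.le]
    have := Real.exp_pos (-L * θ)
    linarith
  have h2 : ∫ θ in Set.Ioo r r', (Real.exp (-L * θ) - 1 + L * θ) ∂π
      ≤ ∫ θ, (Real.exp (-L * θ) - 1 + L * θ) ∂π := by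
    refine setIntegral_le_integral hIF ?_
    filter_upwards [ae_pos hsupp] with θ hθ
    have := F_nonneg (L * θ)
    simp only [Pi.zero_apply]
    rw [neg_mul]; linarith
  have h3 : 0 ≤ ∫ θ in S, (1 - Real.exp (-L * θ)) ∂π := by
    refine integral_nonneg_of_ae ?_
    filter_upwards [ae_restrict_mem hS] with θ hθ
    have hθ0 : 0 < θ := hr.trans (hSs hθ)
    have : Real.exp (-L * θ) ≤ 1 := Real.exp_le_one_iff.2 (by nlinarith)
    simp only [Pi.zero_apply]
    linarith
  have h4 : 0 ≤ α * L + β * L ^ 2 := by positivity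
  have h5 : a ≤ (L * r - 1) * m := by
    have hLr : a / m + 1 ≤ L * r := by
      have : (a / m + 1) / r ≤ L := le_max_right _ _
      calc a / m + 1 = ((a / m + 1) / r) * r := (div_mul_cancel₀ _ hr.ne').symm
        _ ≤ L * r := by nlinarith
    have : a / m * m = a := div_mul_cancel₀ a hm.ne'
    nlinarith
  unfold Phi
  linarith

include hα hβ hsupp hint hr hrr' hππ hS hSs in
lemma T_exists_unique (a : ℝ) (ha : 0 ≤ a) :
    ∃! b : ℝ, 0 ≤ b ∧ Phi α β π b + ∫ θ in S, (1 - Real.exp (-b * θ)) ∂π = a := by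
  obtain ⟨L, hL0, hLa⟩ := T_growth hα hβ hsupp hint hr hrr' hππ hS hSs a
  set T := fun l => Phi α β π l + ∫ θ in S, (1 - Real.exp (-l * θ)) ∂π with hT_def
  have hcont : ContinuousOn T (Set.Icc 0 L) :=
    (T_cont hα hβ hsupp hint hr hrr' hππ hS hSs).mono (Set.Icc_subset_Ici_self)
  have h0 : T 0 = 0 := T_zero hS
  have hmem : a ∈ Set.Icc (T 0) (T L) := ⟨by rw [h0]; exact ha, hLa⟩
  obtain ⟨b, hb, hba⟩ := intermediate_value_Icc hL0 hcont hmem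
  have hba' : Phi α β π b + ∫ θ in S, (1 - Real.exp (-b * θ)) ∂π = a := hba
  refine ⟨b, ⟨hb.1, hba'⟩, ?_⟩
  intro b' hb'
  by_contra hne
  rcases lt_or_gt_of_ne hne with h | h
  · have := T_strict_mono hα hβ hsupp hint hr hrr' hππ hS hSs hb'.1 h
    rw [hb'.2, hba'] at this; exact lt_irrefl a this
  · have := T_strict_mono hα hβ hsupp hint hr hrr' hππ hS hSs hb.1 h
    rw [hb'.2, hba'] at this; exact lt_irrefl a this
end T

open Topology in
/-- Key strict inequality for Theorem 3.8: in the (sub)critical case, if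
`π((r,r')) > 0` then `(Φ^{(r,∞)})⁻¹(π((r,∞))) > (Φ^{[r',∞)})⁻¹(π([r',∞)))`. -/
theorem inverse_strict_inequality_global
    (α β : ℝ) (hα : 0 ≤ α) (hβ : 0 ≤ β) (π : Measure ℝ)
    (hsupp : π (Set.Iic 0) = 0) (hσ : SigmaFinite π)
    (hint : Integrable (fun θ => min θ (θ ^ 2)) π)
    (r r' : ℝ) (hr : 0 < r) (hrr' : r < r')
    (hππ : 0 < π (Set.Ioo r r')) :
    -- Φ satisfies Assumption H0 with largest root q = 0
    (∃ l : ℝ, 0 < l ∧ 0 < Phi α β π l) ∧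
    Phi α β π 0 = 0 ∧ (∀ a : ℝ, 0 < a → Phi α β π a ≠ 0) ∧
    -- the inverses are well-defined on [0,∞)
    (∀ a : ℝ, 0 ≤ a → ∃! b : ℝ, 0 ≤ b ∧ PhiIoi α β π r b = a) ∧
    (∀ a : ℝ, 0 ≤ a → ∃! b : ℝ, 0 ≤ b ∧ PhiIci α β π r' b = a) ∧
    -- the strict inequality between the inverse values
    (∀ b₁ b₂ : ℝ, 0 ≤ b₁ → PhiIoi α β π r b₁ = (π (Set.Ioi r)).toReal →
      0 ≤ b₂ → PhiIci α β π r' b₂ = (π (Set.Ici r')).toReal → b₂ < b₁) := by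

  have hIciSub : Set.Ici r' ⊆ Set.Ioi r := fun θ hθ => lt_of_lt_of_le hrr' hθ
  have hfinIoo : π (Set.Ioo r r') ≠ ⊤ :=
    (lt_of_le_of_lt (measure_mono Set.Ioo_subset_Ioi_self) (measure_Ioi_lt_top hint hr)).ne
  have hm : 0 < (π (Set.Ioo r r')).toReal := ENNReal.toReal_pos hππ.ne' hfinIoo
  set m := (π (Set.Ioo r r')).toReal with hm_def
  have phi_pos : ∀ a : ℝ, 0 < a → 0 < Phi α β π a := by
    intro a ha
    have h := Phi_strict_mono hα hβ hsupp hint hr hrr' (b := 0) (b' := a) le_rfl ha.le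
    have hc : 0 < Real.exp (-((a - 0) * r)) - 1 + (a - 0) * r := F_pos (by nlinarith)
    have h0 : Phi α β π 0 = 0 := Phi_zero
    nlinarith [mul_pos hc hm]
  refine ⟨⟨1, one_pos, phi_pos 1 one_pos⟩, Phi_zero, fun a ha => (phi_pos a ha).ne', ?_, ?_, ?_⟩
  · intro a ha
    exact T_exists_unique hα hβ hsupp hint hr hrr' hππ measurableSet_Ioi subset_rfl a ha
  · intro a ha
    exact T_exists_unique hα hβ hsupp hint hr hrr' hππ measurableSet_Ici hIciSub a ha
  · intro b₁ b₂ hb₁ he₁ hb₂ he₂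
    by_contra hcon
    push_neg at hcon
    have he₁' : Phi α β π b₁ + ∫ θ in Set.Ioi r, (1 - Real.exp (-b₁ * θ)) ∂π
        = (π (Set.Ioi r)).toReal := he₁
    have he₂' : Phi α β π b₂ + ∫ θ in Set.Ici r', (1 - Real.exp (-b₂ * θ)) ∂π
        = (π (Set.Ici r')).toReal := he₂
    have hfin' : π (Set.Ici r') ≠ ⊤ :=
      (lt_of_le_of_lt (measure_mono hIciSub) (measure_Ioi_lt_top hint hr)).ne
    have hGIoo : IntegrableOn (fun θ => 1 - Real.exp (-b₂ * θ)) (Set.Ioo r r') π :=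
      integrableOn_G hint hb₂ hr measurableSet_Ioo Set.Ioo_subset_Ioi_self
    have hGIci : IntegrableOn (fun θ => 1 - Real.exp (-b₂ * θ)) (Set.Ici r') π :=
      integrableOn_G hint hb₂ hr measurableSet_Ici hIciSub
    have hdisj : Disjoint (Set.Ioo r r') (Set.Ici r') := by
      rw [Set.disjoint_left]
      intro θ h1 h2
      exact absurd (h2 : r' ≤ θ) (not_le.2 h1.2)
    have hunion : Set.Ioo r r' ∪ Set.Ici r' = Set.Ioi r := Set.Ioo_union_Ici_eq_Ioi hrr'
    have hsplit : ∫ θ in Set.Ioi r, (1 - Real.exp (-b₂ * θ)) ∂π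
        = (∫ θ in Set.Ioo r r', (1 - Real.exp (-b₂ * θ)) ∂π)
          + ∫ θ in Set.Ici r', (1 - Real.exp (-b₂ * θ)) ∂π := by
      rw [← hunion]
      exact setIntegral_union hdisj measurableSet_Ici hGIoo hGIci
    have hmeas_split : (π (Set.Ioi r)).toReal = m + (π (Set.Ici r')).toReal := by
      rw [← hunion, measure_union hdisj measurableSet_Ici,
        ENNReal.toReal_add hfinIoo hfin']
    have hconst : IntegrableOn (fun _ : ℝ => (1:ℝ)) (Set.Ioo r r') π :=
      integrableOn_const hfinIoo
    have hE : IntegrableOn (fun θ => Real.exp (-b₂ * θ)) (Set.Ioo r r') π := by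
      have heq : (fun θ : ℝ => Real.exp (-b₂ * θ))
          = fun θ => (1:ℝ) - (1 - Real.exp (-b₂ * θ)) := by funext θ; ring
      rw [heq]; exact hconst.sub hGIoo
    have hlt : ∫ θ in Set.Ioo r r', (1 - Real.exp (-b₂ * θ)) ∂π < m := by
      have h1 : ∫ θ in Set.Ioo r r', (1 - Real.exp (-b₂ * θ)) ∂π
          = (∫ θ in Set.Ioo r r', (1:ℝ) ∂π)
            - ∫ θ in Set.Ioo r r', Real.exp (-b₂ * θ) ∂π := integral_sub hconst hE
      have h2 : ∫ θ in Set.Ioo r r', (1:ℝ) ∂π = m := by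
        rw [setIntegral_const]; simp [hm_def]; rfl
      have h3 : Real.exp (-b₂ * r') * m ≤ ∫ θ in Set.Ioo r r', Real.exp (-b₂ * θ) ∂π := by
        refine setIntegral_ge_of_const_le_real measurableSet_Ioo hfinIoo ?_ hE
        intro θ hθ
        exact Real.exp_le_exp.2 (by nlinarith [hθ.2.le])
      nlinarith [mul_pos (Real.exp_pos (-b₂ * r')) hm]
    have hmono := T_mono hα hβ hsupp hint hr hrr' hππ measurableSet_Ioi subset_rfl hb₁ hcon
    rw [he₁', hsplit] at hmono
    linarith
end
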